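/- arXiv:2411.15769 — 4 statements merged into one kernel-verified Lean document; each statement's English description precedes it below -/
import Mathlib

section
/- For every x ∈ ℝⁿ the maximizer y*(x) = argmax_{y ∈ ℝᵐ} f(x,y) exists and is unique, the map x ↦ y*(x) is κ-Lipschitz continuous with κ = ℓ/μ, and the gradient of P(x) = max_{y} f(x,y) satisfies ∇P(x) = ∇_x f(x, y*(x)) for all x. -/
noncomputable section

open RealInnerProductSpace

/-- `ℝⁿ` as a Euclidean space. -/
abbrev En (n : ℕ) := EuclideanSpace ℝ (Fin n)

/-- The point `(x, y)` in the Euclidean (ℓ²) product `ℝⁿ × ℝᵐ`. -/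
def pair {n m : ℕ} (x : En n) (y : En m) : WithLp 2 (En n × En m) :=
  (WithLp.equiv 2 (En n × En m)).symm (x, y)

/-- Partial gradient `∇ₓ f(x, y)` with respect to the first variable. -/
def gradx {n m : ℕ} (f : WithLp 2 (En n × En m) → ℝ) (x : En n) (y : En m) : En n :=
  gradient (fun x' => f (pair x' y)) x

/-- Partial gradient `∇_y f(x, y)` with respect to the second variable. -/
def grady {n m : ℕ} (f : WithLp 2 (En n × En m) → ℝ) (x : En n) (y : En m) : En m :=
  gradient (fun y' => f (pair x y')) y

/-- Second-order partial derivative `∇²ₓₓ f(x, y)`. -/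
def Hxx {n m : ℕ} (f : WithLp 2 (En n × En m) → ℝ) (x : En n) (y : En m) : En n →L[ℝ] En n :=
  fderiv ℝ (fun x' => gradx f x' y) x

/-- Second-order partial derivative `∇²ₓ_y f(x, y)`. -/
def Hxy {n m : ℕ} (f : WithLp 2 (En n × En m) → ℝ) (x : En n) (y : En m) : En m →L[ℝ] En n :=
  fderiv ℝ (fun y' => gradx f x y') y

/-- Second-order partial derivative `∇²_yₓ f(x, y)`. -/
def Hyx {n m : ℕ} (f : WithLp 2 (En n × En m) → ℝ) (x : En n) (y : En m) : En n →L[ℝ] En m :=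
  fderiv ℝ (fun x' => grady f x' y) x

/-- Second-order partial derivative `∇²_y_y f(x, y)`. -/
def Hyy {n m : ℕ} (f : WithLp 2 (En n × En m) → ℝ) (x : En n) (y : En m) : En m →L[ℝ] En m :=
  fderiv ℝ (fun y' => grady f x y') y

/-- `H(x,y) = ∇²ₓₓf(x,y) − ∇²ₓ_yf(x,y) (∇²_y_yf(x,y))⁻¹ ∇²_yₓf(x,y)`. -/
def Hmat {n m : ℕ} (f : WithLp 2 (En n × En m) → ℝ) (x : En n) (y : En m) : En n →L[ℝ] En n :=
  Hxx f x y - (Hxy f x y).comp (((Hyy f x y).inverse).comp (Hyx f x y))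

/-- `P(x) = max_y f(x, y)` (as a supremum over `y`). -/
def Pmax {n m : ℕ} (f : WithLp 2 (En n × En m) → ℝ) (x : En n) : ℝ := ⨆ y, f (pair x y)

/-- The Hessian of `P` at `x`, as the derivative of the gradient map. -/
def hessP {n : ℕ} (P : En n → ℝ) (x : En n) : En n →L[ℝ] En n := fderiv ℝ (gradient P) x

section AuxGeneral

open Set

variable {E : Type*} [NormedAddCommGroup E] [InnerProductSpace ℝ E] [CompleteSpace E]

lemma fderiv_apply_eq_inner_gradient (f : E → ℝ) (x v : E) :
    fderiv ℝ f x v = ⟪gradient f x, v⟫ := by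
  rw [gradient, ← InnerProductSpace.toDual_apply_apply, LinearIsometryEquiv.apply_symm_apply]

theorem sc_first_order {g : E → ℝ} {μ : ℝ} (hg : Differentiable ℝ g)
    (hc : StrongConcaveOn Set.univ μ g) (a b : E) :
    g b + μ / 2 * ‖b - a‖ ^ 2 ≤ g a + ⟪gradient g a, b - a⟫ := by
  set h : ℝ → ℝ := fun t => g (a + t • (b - a)) with hh
  set d : ℝ := ⟪gradient g a, b - a⟫ with hdd
  have hd : HasDerivAt h d 0 := by
    have h1 : HasDerivAt (fun t : ℝ => a + t • (b - a)) (b - a) 0 := by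
      simpa using ((hasDerivAt_id (0 : ℝ)).smul_const (b - a)).const_add a
    have h2 := ((hg (a + (0:ℝ) • (b - a))).hasFDerivAt).comp_hasDerivAt 0 h1
    rw [zero_smul, add_zero, fderiv_apply_eq_inner_gradient] at h2
    exact h2
  have hslope : Filter.Tendsto (slope h 0) (nhdsWithin 0 (Set.Ioi 0)) (nhds d) :=
    (hasDerivAt_iff_tendsto_slope.1 hd).mono_left
      (nhdsWithin_mono _ (fun t ht => ne_of_gt ht))
  have key : ∀ t ∈ Set.Ioc (0:ℝ) 1,
      g b - g a + (1 - t) * (μ / 2 * ‖b - a‖ ^ 2) ≤ slope h 0 t := by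
    intro t ht
    have hcc := hc.2 (mem_univ b) (mem_univ a) ht.1.le
      (sub_nonneg.2 ht.2) (by ring : t + (1 - t) = 1)
    have hpt : t • b + (1 - t) • a = a + t • (b - a) := by module
    rw [hpt] at hcc
    rw [slope_def_field, sub_zero, le_div_iff₀ ht.1]
    simp only [smul_eq_mul] at hcc
    show (g b - g a + (1 - t) * (μ / 2 * ‖b - a‖ ^ 2)) * t ≤ h t - h 0
    have hh0 : h 0 = g a := by simp [h]
    rw [hh0]
    nlinarith [hcc]
  have h2 : Filter.Tendsto (fun t : ℝ => g b - g a + (1 - t) * (μ / 2 * ‖b - a‖ ^ 2))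
      (nhdsWithin 0 (Set.Ioi 0)) (nhds (g b - g a + (1 - 0) * (μ / 2 * ‖b - a‖ ^ 2))) :=
    ((continuous_const.add (((continuous_const.sub continuous_id).mul
      continuous_const))).tendsto 0).mono_left nhdsWithin_le_nhds
  have hle := le_of_tendsto_of_tendsto h2 hslope
    (Filter.eventually_of_mem (Ioc_mem_nhdsGT_of_mem ⟨le_refl 0, zero_lt_one⟩) key)
  simp only [sub_zero, one_mul] at hle
  linarith

theorem quad_bound {φ : E → ℝ} {L : ℝ} (hL : 0 ≤ L) (hφ : Differentiable ℝ φ)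
    (hlip : ∀ a b, ‖gradient φ a - gradient φ b‖ ≤ L * ‖a - b‖) (x x' : E) :
    |φ x' - φ x - ⟪gradient φ x, x' - x⟫| ≤ L * ‖x' - x‖ ^ 2 := by
  set G := gradient φ x with hG
  set T : E →L[ℝ] ℝ := (InnerProductSpace.toDual ℝ E G : E →L[ℝ] ℝ) with hT
  set ψ : E → ℝ := fun z => φ z - T z with hψ
  have hψd : ∀ z, HasFDerivAt ψ (fderiv ℝ φ z - T) z :=
    fun z => (hφ z).hasFDerivAt.sub T.hasFDerivAt
  have bound : ∀ z ∈ segment ℝ x x', ‖fderiv ℝ φ z - T‖ ≤ L * ‖x' - x‖ := by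
    intro z hz
    have h1 : fderiv ℝ φ z - T =
        (InnerProductSpace.toDual ℝ E) (gradient φ z - G) := by
      rw [map_sub]
      congr 1
      · rw [gradient]; exact ((InnerProductSpace.toDual ℝ E).apply_symm_apply _).symm
    rw [h1, LinearIsometryEquiv.norm_map]
    refine (hlip z x).trans ?_
    gcongr
    obtain ⟨u, v, hu, hv, huv, rfl⟩ := hz
    have : u • x + v • x' - x = v • (x' - x) := by
      have : u = 1 - v := by linarith
      rw [this]; module
    rw [this, norm_smul, Real.norm_eq_abs, abs_of_nonneg hv]
    nlinarith [norm_nonneg (x' - x)]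
  have hmv := Convex.norm_image_sub_le_of_norm_hasFDerivWithin_le
    (fun z _ => (hψd z).hasFDerivWithinAt) bound (convex_segment x x')
    (left_mem_segment ℝ x x') (right_mem_segment ℝ x x')
  have hψe : ψ x' - ψ x = φ x' - φ x - ⟪G, x' - x⟫ := by
    simp only [hψ, hT, InnerProductSpace.toDual_apply_apply, inner_sub_right]
    ring
  rw [Real.norm_eq_abs, hψe] at hmv
  calc |φ x' - φ x - ⟪G, x' - x⟫| ≤ L * ‖x' - x‖ * ‖x' - x‖ := hmv
    _ = L * ‖x' - x‖ ^ 2 := by ring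

theorem sc_exists_max [FiniteDimensional ℝ E] {g : E → ℝ} {μ : ℝ} (hμ : 0 < μ)
    (hg : Differentiable ℝ g) (hc : StrongConcaveOn Set.univ μ g) :
    ∃ y, ∀ y', g y' ≤ g y := by
  have hcoer : ∀ b : E, g b ≤ g 0 + ‖gradient g 0‖ * ‖b‖ - μ / 2 * ‖b‖ ^ 2 := by
    intro b
    have h1 := sc_first_order hg hc 0 b
    have h2 := real_inner_le_norm (gradient g 0) (b - 0)
    simp only [sub_zero] at h1 h2
    nlinarith [norm_nonneg b, norm_nonneg (gradient g 0)]
  set R : ℝ := (2 * (‖gradient g 0‖ + 1)) / μ with hR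
  have hR0 : 0 ≤ R := by positivity
  have hout : ∀ b : E, R < ‖b‖ → g b < g 0 := by
    intro b hb
    have h1 := hcoer b
    have h3 : 2 * (‖gradient g 0‖ + 1) < ‖b‖ * μ := (div_lt_iff₀ hμ).1 hb
    have hbpos : 0 < ‖b‖ := lt_of_le_of_lt hR0 hb
    nlinarith [norm_nonneg (gradient g 0)]
  obtain ⟨y₀, hy₀mem, hy₀⟩ := (isCompact_closedBall (0:E) R).exists_isMaxOn
    ⟨0, Metric.mem_closedBall_self hR0⟩ hg.continuous.continuousOn
  rw [isMaxOn_iff] at hy₀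
  refine ⟨y₀, fun b => ?_⟩
  by_cases hb : ‖b‖ ≤ R
  · exact hy₀ b (by simpa [Metric.mem_closedBall, dist_zero_right] using hb)
  · exact le_of_lt (lt_of_lt_of_le (hout b (lt_of_not_ge hb))
      (hy₀ 0 (Metric.mem_closedBall_self hR0)))

end AuxGeneral

section AuxProd

variable {n m : ℕ}

def inlC (n m : ℕ) : En n →L[ℝ] WithLp 2 (En n × En m) :=
  ((WithLp.prodContinuousLinearEquiv 2 ℝ (En n) (En m)).symm :
    (En n × En m) ≃L[ℝ] WithLp 2 (En n × En m)).toContinuousLinearMap.comp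
    (ContinuousLinearMap.inl ℝ (En n) (En m))

def inrC (n m : ℕ) : En m →L[ℝ] WithLp 2 (En n × En m) :=
  ((WithLp.prodContinuousLinearEquiv 2 ℝ (En n) (En m)).symm :
    (En n × En m) ≃L[ℝ] WithLp 2 (En n × En m)).toContinuousLinearMap.comp
    (ContinuousLinearMap.inr ℝ (En n) (En m))

lemma pair_eq (x : En n) (y : En m) : pair x y = inlC n m x + inrC n m y := by
  simp only [pair, inlC, inrC, ContinuousLinearMap.comp_apply,
    ContinuousLinearMap.inl_apply, ContinuousLinearMap.inr_apply]
  rw [show ((WithLp.prodContinuousLinearEquiv 2 ℝ (En n) (En m)).symm :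
    (En n × En m) ≃L[ℝ] WithLp 2 (En n × En m)).toContinuousLinearMap ((x,0) : En n × En m)
    = (WithLp.equiv 2 (En n × En m)).symm (x, 0) from rfl]
  rw [show ((WithLp.prodContinuousLinearEquiv 2 ℝ (En n) (En m)).symm :
    (En n × En m) ≃L[ℝ] WithLp 2 (En n × En m)).toContinuousLinearMap ((0,y) : En n × En m)
    = (WithLp.equiv 2 (En n × En m)).symm (0, y) from rfl]
  rw [WithLp.equiv_symm_apply, ← WithLp.toLp_add]
  simp

lemma hasFDerivAt_slicex (f : WithLp 2 (En n × En m) → ℝ) (hfd : Differentiable ℝ f)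
    (x : En n) (y : En m) :
    HasFDerivAt (fun x' => f (pair x' y))
      ((fderiv ℝ f (pair x y)).comp (inlC n m)) x := by
  have h1 : HasFDerivAt (fun x' : En n => pair x' y) (inlC n m) x := by
    have heq : (fun x' : En n => pair x' y) = fun x' => inlC n m x' + inrC n m y :=
      funext fun x' => pair_eq x' y
    rw [heq]
    exact (inlC n m).hasFDerivAt.add_const _
  exact (hfd (pair x y)).hasFDerivAt.comp x h1

lemma hasFDerivAt_slicey (f : WithLp 2 (En n × En m) → ℝ) (hfd : Differentiable ℝ f)
    (x : En n) (y : En m) :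
    HasFDerivAt (fun y' => f (pair x y'))
      ((fderiv ℝ f (pair x y)).comp (inrC n m)) y := by
  have h1 : HasFDerivAt (fun y' : En m => pair x y') (inrC n m) y := by
    have heq : (fun y' : En m => pair x y') = fun y' => inrC n m y' + inlC n m x := by
      funext y'; rw [pair_eq x y', add_comm]
    rw [heq]
    exact (inrC n m).hasFDerivAt.add_const _
  exact (hfd (pair x y)).hasFDerivAt.comp y h1

lemma gradx_eq {f : WithLp 2 (En n × En m) → ℝ} (hfd : Differentiable ℝ f)
    (x : En n) (y : En m) : gradx f x y = (gradient f (pair x y)).ofLp.1 := by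
  have h := (hasFDerivAt_slicex f hfd x y).fderiv
  have key : (InnerProductSpace.toDual ℝ (En n)) (gradient f (pair x y)).ofLp.1
      = (fderiv ℝ f (pair x y)).comp (inlC n m) := by
    ext v
    rw [ContinuousLinearMap.comp_apply, fderiv_apply_eq_inner_gradient f (pair x y),
      InnerProductSpace.toDual_apply_apply, WithLp.prod_inner_apply]
    have h1 : (inlC n m v).ofLp.1 = v := rfl
    have h2 : (inlC n m v).ofLp.2 = 0 := rfl
    rw [h1, h2, inner_zero_right, add_zero]
  rw [gradx, gradient, h, ← key, LinearIsometryEquiv.symm_apply_apply]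

lemma grady_eq {f : WithLp 2 (En n × En m) → ℝ} (hfd : Differentiable ℝ f)
    (x : En n) (y : En m) : grady f x y = (gradient f (pair x y)).ofLp.2 := by
  have h := (hasFDerivAt_slicey f hfd x y).fderiv
  have key : (InnerProductSpace.toDual ℝ (En m)) (gradient f (pair x y)).ofLp.2
      = (fderiv ℝ f (pair x y)).comp (inrC n m) := by
    ext v
    rw [ContinuousLinearMap.comp_apply, fderiv_apply_eq_inner_gradient f (pair x y),
      InnerProductSpace.toDual_apply_apply, WithLp.prod_inner_apply]
    have h1 : (inrC n m v).ofLp.1 = 0 := rfl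
    have h2 : (inrC n m v).ofLp.2 = v := rfl
    rw [h1, h2, inner_zero_right, zero_add]
  rw [grady, gradient, h, ← key, LinearIsometryEquiv.symm_apply_apply]

lemma fst_norm_le (a : WithLp 2 (En n × En m)) : ‖a.ofLp.1‖ ≤ ‖a‖ := by
  have h : ‖a‖ ^ 2 = ‖a.ofLp.1‖ ^ 2 + ‖a.ofLp.2‖ ^ 2 := WithLp.prod_norm_sq_eq_of_L2 a
  nlinarith [norm_nonneg a, norm_nonneg a.ofLp.1, norm_nonneg a.ofLp.2]

lemma snd_norm_le (a : WithLp 2 (En n × En m)) : ‖a.ofLp.2‖ ≤ ‖a‖ := by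
  have h : ‖a‖ ^ 2 = ‖a.ofLp.1‖ ^ 2 + ‖a.ofLp.2‖ ^ 2 := WithLp.prod_norm_sq_eq_of_L2 a
  nlinarith [norm_nonneg a, norm_nonneg a.ofLp.1, norm_nonneg a.ofLp.2]

lemma pair_sub_x (x x' : En n) (y : En m) : ‖pair x y - pair x' y‖ = ‖x - x'‖ := by
  have h : pair x y - pair x' y = (WithLp.equiv 2 (En n × En m)).symm (x - x', 0) := by
    rw [pair, pair, WithLp.equiv_symm_apply, ← WithLp.toLp_sub, Prod.mk_sub_mk, sub_self]
  rw [h, WithLp.equiv_symm_apply, WithLp.norm_toLp_fst]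

lemma pair_sub_y (x : En n) (y y' : En m) : ‖pair x y - pair x y'‖ = ‖y - y'‖ := by
  have h : pair x y - pair x y' = (WithLp.equiv 2 (En n × En m)).symm (0, y - y') := by
    rw [pair, pair, WithLp.equiv_symm_apply, ← WithLp.toLp_sub, Prod.mk_sub_mk, sub_self]
  rw [h, WithLp.equiv_symm_apply, WithLp.norm_toLp_snd]

end AuxProd

set_option maxHeartbeats 2000000 in
/-- Under twice continuous differentiability of `f`, `ℓ`-Lipschitz continuity
of its full gradient, and `μ`-strong concavity in `y` with `0 < μ ≤ ℓ`: for every `x` the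
maximizer `y*(x)` exists and is unique, `x ↦ y*(x)` is `κ = ℓ/μ`-Lipschitz, and
`∇P(x) = ∇ₓ f(x, y*(x))`. -/
theorem statement0 {n m : ℕ} (f : WithLp 2 (En n × En m) → ℝ) (ℓ μ : ℝ)
    (hμ : 0 < μ) (hμℓ : μ ≤ ℓ)
    (hf : ContDiff ℝ 2 f)
    (hlip : ∀ p q : WithLp 2 (En n × En m), ‖gradient f p - gradient f q‖ ≤ ℓ * ‖p - q‖)
    (hconc : ∀ x : En n, StrongConcaveOn Set.univ μ (fun y => f (pair x y))) :
    ∃ ystar : En n → En m,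
      (∀ x : En n, (∀ y, f (pair x y) ≤ f (pair x (ystar x))) ∧
        (∀ y, (∀ y', f (pair x y') ≤ f (pair x y)) → y = ystar x)) ∧
      (∀ x x' : En n, ‖ystar x - ystar x'‖ ≤ ℓ / μ * ‖x - x'‖) ∧
      (∀ x : En n, gradient (Pmax f) x = gradx f x (ystar x)) := by
  classical
  have hℓ0 : 0 < ℓ := lt_of_lt_of_le hμ hμℓ
  have hfd : Differentiable ℝ f := hf.differentiable two_ne_zero
  have hdx : ∀ y : En m, Differentiable ℝ (fun x' => f (pair x' y)) :=
    fun y x' => (hasFDerivAt_slicex f hfd x' y).differentiableAt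
  have hdy : ∀ x : En n, Differentiable ℝ (fun y' => f (pair x y')) :=
    fun x y' => (hasFDerivAt_slicey f hfd x y').differentiableAt
  -- Lipschitz estimates for partial gradients
  have hlipx : ∀ (y : En m) (a b : En n), ‖gradx f a y - gradx f b y‖ ≤ ℓ * ‖a - b‖ := by
    intro y a b
    rw [gradx_eq hfd, gradx_eq hfd]
    have h1 : (gradient f (pair a y)).ofLp.1 - (gradient f (pair b y)).ofLp.1
        = (gradient f (pair a y) - gradient f (pair b y)).ofLp.1 := rfl
    rw [h1]
    refine (fst_norm_le _).trans ?_
    refine (hlip _ _).trans ?_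
    rw [pair_sub_x]
  have hlipxy : ∀ (x : En n) (a b : En m), ‖gradx f x a - gradx f x b‖ ≤ ℓ * ‖a - b‖ := by
    intro x a b
    rw [gradx_eq hfd, gradx_eq hfd]
    have h1 : (gradient f (pair x a)).ofLp.1 - (gradient f (pair x b)).ofLp.1
        = (gradient f (pair x a) - gradient f (pair x b)).ofLp.1 := rfl
    rw [h1]
    refine (fst_norm_le _).trans ?_
    refine (hlip _ _).trans ?_
    rw [pair_sub_y]
  have hlipyx : ∀ (y : En m) (a b : En n), ‖grady f a y - grady f b y‖ ≤ ℓ * ‖a - b‖ := by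
    intro y a b
    rw [grady_eq hfd, grady_eq hfd]
    have h1 : (gradient f (pair a y)).ofLp.2 - (gradient f (pair b y)).ofLp.2
        = (gradient f (pair a y) - gradient f (pair b y)).ofLp.2 := rfl
    rw [h1]
    refine (snd_norm_le _).trans ?_
    refine (hlip _ _).trans ?_
    rw [pair_sub_x]
  -- existence of the maximizer
  have hex : ∀ x : En n, ∃ y, ∀ y', f (pair x y') ≤ f (pair x y) :=
    fun x => sc_exists_max hμ (hdy x) (hconc x)
  set ystar : En n → En m := fun x => Classical.choose (hex x) with hys
  have hmax : ∀ x y, f (pair x y) ≤ f (pair x (ystar x)) :=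
    fun x => Classical.choose_spec (hex x)
  -- first-order condition
  have hcrit : ∀ x, grady f x (ystar x) = 0 := by
    intro x
    have hM : IsLocalMax (fun y' => f (pair x y')) (ystar x) :=
      Filter.Eventually.of_forall (hmax x)
    have h0 := hM.fderiv_eq_zero
    rw [grady, gradient, h0, map_zero]
  -- first-order inequality for the y-slices
  have hfo : ∀ (x : En n) (a b : En m),
      f (pair x b) + μ / 2 * ‖b - a‖ ^ 2 ≤ f (pair x a) + ⟪grady f x a, b - a⟫ :=
    fun x a b => sc_first_order (hdy x) (hconc x) a b
  -- uniqueness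
  have huniq : ∀ x y, (∀ y', f (pair x y') ≤ f (pair x y)) → y = ystar x := by
    intro x y hy
    have h1 := hfo x (ystar x) y
    rw [hcrit x, inner_zero_left, add_zero] at h1
    have h2 := hy (ystar x)
    have h3 : ‖y - ystar x‖ ^ 2 ≤ 0 := by nlinarith
    have h4 : ‖y - ystar x‖ = 0 := by nlinarith [norm_nonneg (y - ystar x)]
    have h5 : y - ystar x = 0 := norm_eq_zero.1 h4
    exact sub_eq_zero.1 h5
  -- Lipschitz continuity of ystar
  have hlipstar : ∀ x x' : En n, ‖ystar x - ystar x'‖ ≤ ℓ / μ * ‖x - x'‖ := by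
    intro x x'
    set y₁ := ystar x
    set y₂ := ystar x'
    have h1 := hfo x y₁ y₂
    have h2 := hfo x y₂ y₁
    rw [hcrit x, inner_zero_left, add_zero] at h1
    have hna : ‖y₁ - y₂‖ = ‖y₂ - y₁‖ := norm_sub_rev _ _
    have hkey : μ * ‖y₁ - y₂‖ ^ 2 ≤ ⟪grady f x y₂ - grady f x' y₂, y₁ - y₂⟫ := by
      rw [hcrit x', sub_zero, hna]
      rw [hna] at h2
      linarith
    have hb1 := real_inner_le_norm (grady f x y₂ - grady f x' y₂) (y₁ - y₂)
    have hb2 := mul_le_mul_of_nonneg_right (hlipyx y₂ x x') (norm_nonneg (y₁ - y₂))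
    have hfin : μ * ‖y₁ - y₂‖ ^ 2 ≤ ℓ * ‖x - x'‖ * ‖y₁ - y₂‖ := by linarith
    rcases eq_or_lt_of_le (norm_nonneg (y₁ - y₂)) with h0 | h0
    · rw [← h0]; positivity
    · have h6 : μ * ‖y₁ - y₂‖ ≤ ℓ * ‖x - x'‖ := by
        nlinarith [hfin, h0]
      rw [div_mul_eq_mul_div, le_div_iff₀ hμ]
      linarith
  -- value of Pmax
  have hbdd : ∀ x, BddAbove (Set.range fun y => f (pair x y)) :=
    fun x => ⟨f (pair x (ystar x)), by rintro _ ⟨y, rfl⟩; exact hmax x y⟩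
  have hP : ∀ x, Pmax f x = f (pair x (ystar x)) :=
    fun x => le_antisymm (ciSup_le (hmax x)) (le_ciSup (hbdd x) (ystar x))
  -- quadratic bound in the x variable
  have hqb : ∀ (y : En m) (x₀ x₁ : En n),
      |f (pair x₁ y) - f (pair x₀ y) - ⟪gradx f x₀ y, x₁ - x₀⟫| ≤ ℓ * ‖x₁ - x₀‖ ^ 2 :=
    fun y x₀ x₁ => quad_bound hℓ0.le (hdx y) (hlipx y) x₀ x₁
  -- Danskin
  have hgrad : ∀ x, gradient (Pmax f) x = gradx f x (ystar x) := by
    intro x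
    set g' := gradx f x (ystar x) with hg'
    set C : ℝ := ℓ + ℓ * (ℓ / μ) + 1 with hC
    have hC0 : 0 ≤ ℓ * (ℓ / μ) := by positivity
    have hCpos : 0 < C := by positivity
    have herr : ∀ x', |Pmax f x' - Pmax f x - ⟪g', x' - x⟫| ≤ C * ‖x' - x‖ ^ 2 := by
      intro x'
      have hsq : (0:ℝ) ≤ ‖x' - x‖ ^ 2 := sq_nonneg _
      have hlow : Pmax f x + ⟪g', x' - x⟫ - ℓ * ‖x' - x‖ ^ 2 ≤ Pmax f x' := by
        have h1 := (abs_le.1 (hqb (ystar x) x x')).1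
        have h2 : f (pair x' (ystar x)) ≤ Pmax f x' := le_ciSup (hbdd x') (ystar x)
        rw [hP x]
        linarith
      have hup : Pmax f x' ≤ Pmax f x + ⟪g', x' - x⟫ + C * ‖x' - x‖ ^ 2 := by
        have h1 := (abs_le.1 (hqb (ystar x') x x')).2
        have h3 : ⟪gradx f x (ystar x') - g', x' - x⟫ ≤ ℓ * (ℓ / μ) * ‖x' - x‖ ^ 2 := by
          have hb1 := real_inner_le_norm (gradx f x (ystar x') - g') (x' - x)
          have hb2 := hlipxy x (ystar x') (ystar x)
          have hb3 := hlipstar x' x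
          have hb4 : ‖gradx f x (ystar x') - g'‖ ≤ ℓ * (ℓ / μ) * ‖x' - x‖ := by
            rw [hg']
            refine hb2.trans ?_
            rw [mul_assoc]
            exact mul_le_mul_of_nonneg_left hb3 hℓ0.le
          nlinarith [norm_nonneg (x' - x), norm_nonneg (gradx f x (ystar x') - g')]
        have h5 : f (pair x (ystar x')) ≤ Pmax f x := by rw [hP x]; exact hmax x _
        have hCsub : C * ‖x' - x‖ ^ 2
            = ℓ * ‖x' - x‖ ^ 2 + ℓ * (ℓ / μ) * ‖x' - x‖ ^ 2 + ‖x' - x‖ ^ 2 := by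
          rw [hC]; ring
        have hinner : ⟪gradx f x (ystar x'), x' - x⟫
            = ⟪g', x' - x⟫ + ⟪gradx f x (ystar x') - g', x' - x⟫ := by
          rw [inner_sub_left]; ring
        rw [hP x']
        rw [hinner] at h1
        set q : ℝ := ‖x' - x‖ ^ 2 with hq
        set i1 : ℝ := ⟪g', x' - x⟫ with hi1
        set i2 : ℝ := ⟪gradx f x (ystar x') - g', x' - x⟫ with hi2
        clear_value q i1 i2
        clear hq hi1 hi2
        calc f (pair x' (ystar x')) ≤ f (pair x (ystar x')) + (i1 + i2) + ℓ * q := by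
              linarith [h1]
          _ ≤ Pmax f x + i1 + (ℓ * (ℓ / μ) * q + ℓ * q) := by linarith [h3, h5]
          _ ≤ Pmax f x + i1 + C * q := by linarith [hCsub, hsq]
      have hCge : ℓ * ‖x' - x‖ ^ 2 ≤ C * ‖x' - x‖ ^ 2 := by
        rw [hC]; nlinarith [hsq, hC0]
      rw [abs_le]
      constructor <;> linarith
    have hF : HasFDerivAt (Pmax f)
        ((InnerProductSpace.toDual ℝ (En n)) g' : En n →L[ℝ] ℝ) x := by
      rw [hasFDerivAt_iff_isLittleO_nhds_zero, Asymptotics.isLittleO_iff]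
      intro c hc
      have hball : Metric.ball (0 : En n) (c / C) ∈ nhds (0 : En n) :=
        Metric.ball_mem_nhds _ (by positivity)
      filter_upwards [hball] with h hh
      have h1 := herr (x + h)
      rw [add_sub_cancel_left] at h1
      have hnorm : ‖h‖ < c / C := by
        simpa [Metric.mem_ball, dist_zero_right] using hh
      rw [Real.norm_eq_abs]
      have h2 : (InnerProductSpace.toDual ℝ (En n)) g' h = ⟪g', h⟫ :=
        InnerProductSpace.toDual_apply_apply
      rw [h2]
      calc |Pmax f (x + h) - Pmax f x - ⟪g', h⟫| ≤ C * ‖h‖ ^ 2 := h1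
        _ = C * ‖h‖ * ‖h‖ := by ring
        _ ≤ c * ‖h‖ := by
            apply mul_le_mul_of_nonneg_right _ (norm_nonneg h)
            calc C * ‖h‖ ≤ C * (c / C) :=
                  mul_le_mul_of_nonneg_left hnorm.le hCpos.le
              _ = c := by field_simp
    rw [gradient, hF.fderiv, LinearIsometryEquiv.symm_apply_apply]
  exact ⟨ystar, fun x => ⟨hmax x, huniq x⟩, hlipstar, hgrad⟩
end
end

section
/- The function P(x) = max_{y ∈ ℝᵐ} f(x,y) is differentiable and its gradient ∇P is Lipschitz continuous with constant L₁ = (κ+1)ℓ, where κ = ℓ/μ. -/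
noncomputable section

open RealInnerProductSpace

/- ====================== Auxiliary lemmas ====================== -/

section GradAux
open Filter Topology Set InnerProductSpace
variable {E : Type*} [NormedAddCommGroup E] [InnerProductSpace ℝ E] [CompleteSpace E]

lemma hasGradientAt_add' {f g : E → ℝ} {a b x : E} (hf : HasGradientAt f a x)
    (hg : HasGradientAt g b x) : HasGradientAt (fun y => f y + g y) (a + b) x := by
  rw [hasGradientAt_iff_hasFDerivAt] at *
  rw [map_add]; exact hf.add hg

lemma hasGradientAt_const_mul_norm_sq (c : ℝ) (x : E) :
    HasGradientAt (fun y : E => c * ‖y‖ ^ 2) ((2 * c) • x) x := by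
  rw [hasGradientAt_iff_isLittleO]
  have key : ∀ x' : E, c * ‖x'‖ ^ 2 - c * ‖x‖ ^ 2 - ⟪(2 * c) • x, x' - x⟫ = c * ‖x' - x‖ ^ 2 := by
    intro x'
    rw [real_inner_smul_left, inner_sub_right, real_inner_self_eq_norm_sq, norm_sub_sq_real,
      real_inner_comm x' x]
    ring
  simp only [key]
  rw [Asymptotics.isLittleO_iff]
  intro ε hε
  rw [Metric.eventually_nhds_iff]
  refine ⟨ε / (|c| + 1), by positivity, fun x' hx' => ?_⟩
  rw [dist_eq_norm] at hx'
  have h1 : ‖c * ‖x' - x‖ ^ 2‖ = |c| * ‖x' - x‖ * ‖x' - x‖ := by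
    rw [norm_mul, Real.norm_eq_abs, Real.norm_eq_abs,
      abs_of_nonneg (by positivity : (0:ℝ) ≤ ‖x' - x‖ ^ 2), sq]
    ring
  rw [h1]
  have h2 : |c| * ‖x' - x‖ ≤ ε := by
    calc |c| * ‖x' - x‖ ≤ |c| * (ε / (|c| + 1)) :=
          mul_le_mul_of_nonneg_left hx'.le (abs_nonneg c)
      _ ≤ ε := by
          rw [div_eq_inv_mul, ← mul_assoc]
          have : |c| * (|c| + 1)⁻¹ ≤ 1 := by
            rw [mul_inv_le_iff₀ (by positivity)]
            linarith [abs_nonneg c]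
          nlinarith [hε.le]
  exact mul_le_mul_of_nonneg_right h2 (norm_nonneg _)

lemma concave_first_order {g : E → ℝ} (hg : ConcaveOn ℝ Set.univ g) {y1 G : E}
    (hG : HasGradientAt g G y1) (y2 : E) : g y2 ≤ g y1 + ⟪G, y2 - y1⟫ := by
  set v := y2 - y1 with hv
  have hline : ∀ t : ℝ, AffineMap.lineMap y1 y2 t = y1 + t • v := by
    intro t; rw [AffineMap.lineMap_apply_module']; abel
  have hφconv : ConvexOn ℝ Set.univ ((-g) ∘ (AffineMap.lineMap y1 y2 : ℝ →ᵃ[ℝ] E)) := by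
    simpa using hg.neg.comp_affineMap (AffineMap.lineMap y1 y2)
  have hderiv : HasDerivAt (fun t : ℝ => g (y1 + t • v)) ⟪G, v⟫ 0 := by
    have hl : HasDerivAt (fun t : ℝ => y1 + t • v) v 0 := by
      simpa using ((hasDerivAt_id (0:ℝ)).smul_const v).const_add y1
    have hf' : HasFDerivAt g (toDual ℝ E G) (y1 + (0:ℝ) • v) := by
      simpa using hasGradientAt_iff_hasFDerivAt.1 hG
    exact hf'.comp_hasDerivAt 0 hl
  have hφderiv : HasDerivAt ((-g) ∘ (AffineMap.lineMap y1 y2 : ℝ →ᵃ[ℝ] E)) (-⟪G, v⟫) 0 := by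
    have : ((-g) ∘ (AffineMap.lineMap y1 y2 : ℝ →ᵃ[ℝ] E)) = fun t => -(g (y1 + t • v)) := by
      funext t; simp [hline t]
    rw [this]; exact hderiv.neg
  have hs := hφconv.le_slope_of_hasDerivAt (Set.mem_univ (0:ℝ)) (Set.mem_univ (1:ℝ)) one_pos
    hφderiv
  rw [slope_def_field] at hs
  have h0 : ((-g) ∘ (AffineMap.lineMap y1 y2 : ℝ →ᵃ[ℝ] E)) 0 = -g y1 := by simp [hline]
  have h1 : ((-g) ∘ (AffineMap.lineMap y1 y2 : ℝ →ᵃ[ℝ] E)) 1 = -g y2 := by simp [hline, hv]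
  rw [h0, h1] at hs
  have : -⟪G, v⟫ ≤ -g y2 - -g y1 := by convert hs using 1; field_simp; ring
  linarith

variable {μ : ℝ} {g : E → ℝ}

lemma grad_of_strong (y : E) (hd : Differentiable ℝ g) :
    HasGradientAt (fun z => g z + μ / 2 * ‖z‖ ^ 2) (gradient g y + μ • y) y := by
  have h2 := hasGradientAt_const_mul_norm_sq (μ / 2) y
  rw [show 2 * (μ / 2) = μ by ring] at h2
  exact hasGradientAt_add' (hd y).hasGradientAt h2

lemma strong_concave_grad_mono (hc : StrongConcaveOn Set.univ μ g)
    (hd : Differentiable ℝ g) (y1 y2 : E) :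
    ⟪gradient g y1 - gradient g y2, y1 - y2⟫ ≤ -(μ * ‖y1 - y2‖ ^ 2) := by
  have hcon : ConcaveOn ℝ Set.univ fun z => g z + μ / 2 * ‖z‖ ^ 2 :=
    strongConcaveOn_iff_convex.1 hc
  have e1 := concave_first_order hcon (grad_of_strong y1 hd) y2
  have e2 := concave_first_order hcon (grad_of_strong y2 hd) y1
  have i1 : ⟪gradient g y1 + μ • y1, y2 - y1⟫
      = ⟪gradient g y1, y2 - y1⟫ + μ * ⟪y1, y2 - y1⟫ := by
    rw [inner_add_left, real_inner_smul_left]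
  have i2 : ⟪gradient g y2 + μ • y2, y1 - y2⟫
      = ⟪gradient g y2, y1 - y2⟫ + μ * ⟪y2, y1 - y2⟫ := by
    rw [inner_add_left, real_inner_smul_left]
  have j1 : ⟪gradient g y1, y2 - y1⟫ = -⟪gradient g y1, y1 - y2⟫ := by
    rw [← inner_neg_right, neg_sub]
  have j2 : ⟪y1, y2 - y1⟫ = -⟪y1, y1 - y2⟫ := by rw [← inner_neg_right, neg_sub]
  have k : μ * ⟪y1, y1 - y2⟫ - μ * ⟪y2, y1 - y2⟫ = μ * ‖y1 - y2‖ ^ 2 := by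
    rw [← mul_sub, ← inner_sub_left, real_inner_self_eq_norm_sq]
  have l : ⟪gradient g y1 - gradient g y2, y1 - y2⟫
      = ⟪gradient g y1, y1 - y2⟫ - ⟪gradient g y2, y1 - y2⟫ := inner_sub_left _ _ _
  rw [i1, j1, j2] at e1
  rw [i2] at e2
  linarith

lemma strong_concave_coercive (hc : StrongConcaveOn Set.univ μ g)
    (hd : Differentiable ℝ g) (y : E) :
    g y ≤ g 0 + ‖gradient g 0‖ * ‖y‖ - μ / 2 * ‖y‖ ^ 2 := by
  have hcon : ConcaveOn ℝ Set.univ fun z => g z + μ / 2 * ‖z‖ ^ 2 :=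
    strongConcaveOn_iff_convex.1 hc
  have e := concave_first_order hcon (grad_of_strong 0 hd) y
  simp only [norm_zero, smul_zero, add_zero, sub_zero] at e
  have : ⟪gradient g 0, y⟫ ≤ ‖gradient g 0‖ * ‖y‖ := real_inner_le_norm _ _
  nlinarith [sq_nonneg ‖y‖]

lemma exists_max [ProperSpace E] (hμ : 0 < μ)
    (hc : StrongConcaveOn Set.univ μ g) (hd : Differentiable ℝ g) :
    ∃ y0, ∀ y, g y ≤ g y0 := by
  set c := ‖gradient g 0‖ with hcdef
  have hn : Tendsto (fun y : E => ‖y‖) (cocompact E) atTop := tendsto_norm_cocompact_atTop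
  have h1 : Tendsto (fun y : E => μ / 2 * ‖y‖ + (-(c + 1))) (cocompact E) atTop :=
    tendsto_atTop_add_const_right _ _ (hn.const_mul_atTop (by positivity))
  have h2 : Tendsto (fun y : E => ‖y‖ * (μ / 2 * ‖y‖ + (-(c + 1)))) (cocompact E) atTop :=
    hn.atTop_mul_atTop₀ h1
  have h4 : Tendsto (fun y : E => ‖y‖ * (μ / 2 * ‖y‖ + (-(c + 1))) + (-(g 0)))
      (cocompact E) atTop := tendsto_atTop_add_const_right _ _ h2
  have hco : Tendsto (fun y : E => -g y) (cocompact E) atTop := by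
    apply tendsto_atTop_mono _ h4
    intro y
    have := strong_concave_coercive hc hd y
    rw [← hcdef] at this
    nlinarith [norm_nonneg y]
  obtain ⟨y0, hy0⟩ := (hd.continuous.neg).exists_forall_le hco
  exact ⟨y0, fun y => by have := hy0 y; simp only [Pi.neg_apply] at this; linarith⟩

lemma grad_eq_zero_of_max (hd : Differentiable ℝ g) {y0 : E}
    (hmax : ∀ y, g y ≤ g y0) : gradient g y0 = 0 := by
  have hloc : IsLocalMax g y0 := Filter.Eventually.of_forall hmax
  have hfd : fderiv ℝ g y0 = 0 := hloc.fderiv_eq_zero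
  have h1 : HasFDerivAt g (toDual ℝ E (gradient g y0)) y0 :=
    hasGradientAt_iff_hasFDerivAt.1 (hd y0).hasGradientAt
  have h2 : toDual ℝ E (gradient g y0) = 0 := by rw [← h1.fderiv, hfd]
  exact (toDual ℝ E).injective (by rw [h2, map_zero])

lemma descent_lemma {q : E → ℝ} {ℓ : ℝ} (hq : Differentiable ℝ q)
    (hL : ∀ u u' : E, ‖gradient q u - gradient q u'‖ ≤ ℓ * ‖u - u'‖) (a b : E) :
    |q b - q a - ⟪gradient q a, b - a⟫| ≤ ℓ / 2 * ‖b - a‖ ^ 2 := by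
  set v := b - a with hv
  have hab : a + (1:ℝ) • v = b := by rw [one_smul, hv]; abel
  have hχ : ∀ t : ℝ, HasDerivAt (fun s : ℝ => q (a + s • v)) ⟪gradient q (a + t • v), v⟫ t := by
    intro t
    have hl : HasDerivAt (fun s : ℝ => a + s • v) v t := by
      simpa using ((hasDerivAt_id t).smul_const v).const_add a
    have hf' : HasFDerivAt q (toDual ℝ E (gradient q (a + t • v))) (a + t • v) :=
      hasGradientAt_iff_hasFDerivAt.1 (hq _).hasGradientAt
    exact hf'.comp_hasDerivAt t hl
  have hbound : ∀ t ∈ Set.Ioo (0:ℝ) 1,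
      |⟪gradient q (a + t • v), v⟫ - ⟪gradient q a, v⟫| ≤ ℓ * ‖v‖ ^ 2 * t := by
    intro t ht
    rw [← inner_sub_left]
    have h1 : |⟪gradient q (a + t • v) - gradient q a, v⟫|
        ≤ ‖gradient q (a + t • v) - gradient q a‖ * ‖v‖ := abs_real_inner_le_norm _ _
    have h2 : ‖gradient q (a + t • v) - gradient q a‖ ≤ ℓ * ‖t • v‖ := by
      simpa [add_sub_cancel_left] using hL (a + t • v) a
    have h3 : ‖t • v‖ = t * ‖v‖ := by rw [norm_smul, Real.norm_eq_abs, abs_of_pos ht.1]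
    calc |⟪gradient q (a + t • v) - gradient q a, v⟫|
        ≤ ‖gradient q (a + t • v) - gradient q a‖ * ‖v‖ := h1
      _ ≤ ℓ * (t * ‖v‖) * ‖v‖ := by
          rw [← h3]; exact mul_le_mul_of_nonneg_right h2 (norm_nonneg _)
      _ = ℓ * ‖v‖ ^ 2 * t := by ring
  have key : ∀ σ : ℝ, σ = 1 ∨ σ = -1 →
      σ * (q b - ⟪gradient q a, v⟫) - ℓ / 2 * ‖v‖ ^ 2 ≤ σ * q a := by
    intro σ hσ
    set F : ℝ → ℝ :=
      fun t => σ * (q (a + t • v) - t * ⟪gradient q a, v⟫) - ℓ / 2 * ‖v‖ ^ 2 * t ^ 2 with hF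
    have hd' : ∀ t : ℝ, HasDerivAt F
        (σ * (⟪gradient q (a + t • v), v⟫ - ⟪gradient q a, v⟫) - ℓ / 2 * ‖v‖ ^ 2 * (2 * t)) t := by
      intro t
      have h1 := ((hχ t).sub (hasDerivAt_mul_const ⟪gradient q a, v⟫)).const_mul σ
      have h2 := (hasDerivAt_pow 2 t).const_mul (ℓ / 2 * ‖v‖ ^ 2)
      have h3 := h1.sub h2
      refine h3.congr_deriv ?_
      push_cast
      ring
    have anti : AntitoneOn F (Set.Icc 0 1) := by
      apply antitoneOn_of_deriv_nonpos (convex_Icc 0 1)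
      · exact Continuous.continuousOn (by
          have h5 : Continuous (fun t : ℝ => q (a + t • v)) := hq.continuous.comp (by continuity)
          rw [hF]; continuity)
      · intro t _
        exact ((hd' t).differentiableAt).differentiableWithinAt
      · intro t ht
        rw [interior_Icc] at ht
        rw [(hd' t).deriv]
        obtain ⟨hlo, hhi⟩ := abs_le.1 (hbound t ht)
        rcases hσ with rfl | rfl <;> nlinarith [ht.1.le]
    have h10 : F 1 ≤ F 0 :=
      anti (Set.mem_Icc.2 ⟨le_refl 0, zero_le_one⟩) (Set.mem_Icc.2 ⟨zero_le_one, le_refl 1⟩)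
        zero_le_one
    have hab2 : a + v = b := by rw [hv]; abel
    have e1 : F 1 = σ * (q b - ⟪gradient q a, v⟫) - ℓ / 2 * ‖v‖ ^ 2 := by
      rw [hF]; simp [hab2]
    have e0 : F 0 = σ * q a := by rw [hF]; simp
    rw [e1, e0] at h10
    exact h10
  have k1 := key 1 (Or.inl rfl)
  have k2 := key (-1) (Or.inr rfl)
  rw [abs_le]
  constructor <;> nlinarith [k1, k2]

end GradAux

/- ====================== Pair / partial gradient lemmas ====================== -/

namespace S1
open InnerProductSpace
variable {n m : ℕ}

def inlL (n m : ℕ) : En n →L[ℝ] WithLp 2 (En n × En m) :=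
  ((WithLp.prodContinuousLinearEquiv 2 ℝ (En n) (En m)).symm :
      (En n × En m) →L[ℝ] WithLp 2 (En n × En m)).comp
    (ContinuousLinearMap.inl ℝ (En n) (En m))

def inrL (n m : ℕ) : En m →L[ℝ] WithLp 2 (En n × En m) :=
  ((WithLp.prodContinuousLinearEquiv 2 ℝ (En n) (En m)).symm :
      (En n × En m) →L[ℝ] WithLp 2 (En n × En m)).comp
    (ContinuousLinearMap.inr ℝ (En n) (En m))

lemma inlL_apply (u : En n) : inlL n m u = pair u 0 := rfl
lemma inrL_apply (v : En m) : inrL n m v = pair 0 v := rfl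

lemma hasFDerivAt_pair_left (x : En n) (y : En m) :
    HasFDerivAt (fun x' => pair x' y) (inlL n m) x := by
  have h : (fun x' : En n => pair x' y) = fun x' => pair 0 y + inlL n m x' := by
    funext x'
    rw [inlL_apply]
    apply (WithLp.equiv 2 _).injective
    simp [pair]
  rw [h]
  exact (inlL n m).hasFDerivAt.const_add _

lemma hasFDerivAt_pair_right (x : En n) (y : En m) :
    HasFDerivAt (fun y' => pair x y') (inrL n m) y := by
  have h : (fun y' : En m => pair x y') = fun y' => pair x 0 + inrL n m y' := by
    funext y'
    rw [inrL_apply]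
    apply (WithLp.equiv 2 _).injective
    simp [pair]
  rw [h]
  exact (inrL n m).hasFDerivAt.const_add _

lemma hasGradientAt_partial_x {f : WithLp 2 (En n × En m) → ℝ} (x : En n) (y : En m)
    (hd : DifferentiableAt ℝ f (pair x y)) :
    HasGradientAt (fun x' => f (pair x' y)) ((gradient f (pair x y)).fst) x := by
  rw [hasGradientAt_iff_hasFDerivAt]
  have hp := hasFDerivAt_pair_left x y
  have hg : HasFDerivAt f (toDual ℝ _ (gradient f (pair x y))) (pair x y) :=
    hasGradientAt_iff_hasFDerivAt.1 hd.hasGradientAt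
  have hcomp := hg.comp x hp
  refine hcomp.congr_fderiv ?_
  ext v
  rw [ContinuousLinearMap.comp_apply, toDual_apply_apply, toDual_apply_apply, inlL_apply,
    WithLp.prod_inner_apply]
  have h1 : (pair v (0 : En m)).ofLp.1 = v := rfl
  have h2 : (pair v (0 : En m)).ofLp.2 = (0 : En m) := rfl
  rw [h1, h2, inner_zero_right, add_zero]; rfl

lemma hasGradientAt_partial_y {f : WithLp 2 (En n × En m) → ℝ} (x : En n) (y : En m)
    (hd : DifferentiableAt ℝ f (pair x y)) :
    HasGradientAt (fun y' => f (pair x y')) ((gradient f (pair x y)).snd) y := by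
  rw [hasGradientAt_iff_hasFDerivAt]
  have hp := hasFDerivAt_pair_right x y
  have hg : HasFDerivAt f (toDual ℝ _ (gradient f (pair x y))) (pair x y) :=
    hasGradientAt_iff_hasFDerivAt.1 hd.hasGradientAt
  have hcomp := hg.comp y hp
  refine hcomp.congr_fderiv ?_
  ext v
  rw [ContinuousLinearMap.comp_apply, toDual_apply_apply, toDual_apply_apply, inrL_apply,
    WithLp.prod_inner_apply]
  have h1 : (pair (0 : En n) v).ofLp.1 = (0 : En n) := rfl
  have h2 : (pair (0 : En n) v).ofLp.2 = v := rfl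
  rw [h1, h2, inner_zero_right, zero_add]; rfl

lemma gradx_eq {f : WithLp 2 (En n × En m) → ℝ} (x : En n) (y : En m)
    (hd : DifferentiableAt ℝ f (pair x y)) :
    gradx f x y = (gradient f (pair x y)).fst :=
  (hasGradientAt_partial_x x y hd).gradient

lemma grady_eq {f : WithLp 2 (En n × En m) → ℝ} (x : En n) (y : En m)
    (hd : DifferentiableAt ℝ f (pair x y)) :
    grady f x y = (gradient f (pair x y)).snd :=
  (hasGradientAt_partial_y x y hd).gradient

lemma norm_fst_le (p : WithLp 2 (En n × En m)) : ‖p.fst‖ ≤ ‖p‖ := by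
  have := WithLp.prod_norm_sq_eq_of_L2 p
  nlinarith [norm_nonneg p, norm_nonneg p.fst, norm_nonneg p.snd, sq_nonneg ‖p.snd‖]

lemma norm_snd_le (p : WithLp 2 (En n × En m)) : ‖p.snd‖ ≤ ‖p‖ := by
  have := WithLp.prod_norm_sq_eq_of_L2 p
  nlinarith [norm_nonneg p, norm_nonneg p.fst, norm_nonneg p.snd, sq_nonneg ‖p.fst‖]

lemma norm_pair (x : En n) (y : En m) : ‖pair x y‖ = Real.sqrt (‖x‖ ^ 2 + ‖y‖ ^ 2) := by
  rw [WithLp.prod_norm_eq_of_L2]; rfl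

lemma norm_pair_left (x : En n) : ‖pair x (0 : En m)‖ = ‖x‖ := by
  rw [norm_pair, norm_zero]
  simp [Real.sqrt_sq (norm_nonneg x)]

lemma norm_pair_right (y : En m) : ‖pair (0 : En n) y‖ = ‖y‖ := by
  rw [norm_pair, norm_zero]
  simp [Real.sqrt_sq (norm_nonneg y)]

lemma pair_sub (x x' : En n) (y y' : En m) :
    pair x y - pair x' y' = pair (x - x') (y - y') := rfl

variable {f : WithLp 2 (En n × En m) → ℝ} {ℓ : ℝ}

lemma gradx_lip_x (hd : Differentiable ℝ f)
    (hlip : ∀ p q : WithLp 2 (En n × En m), ‖gradient f p - gradient f q‖ ≤ ℓ * ‖p - q‖)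
    (x x' : En n) (y : En m) : ‖gradx f x y - gradx f x' y‖ ≤ ℓ * ‖x - x'‖ := by
  rw [gradx_eq x y (hd _), gradx_eq x' y (hd _)]
  calc ‖(gradient f (pair x y)).fst - (gradient f (pair x' y)).fst‖
      = ‖(gradient f (pair x y) - gradient f (pair x' y)).fst‖ := rfl
    _ ≤ ‖gradient f (pair x y) - gradient f (pair x' y)‖ := norm_fst_le _
    _ ≤ ℓ * ‖pair x y - pair x' y‖ := hlip _ _
    _ = ℓ * ‖x - x'‖ := by rw [pair_sub, sub_self, norm_pair_left]

lemma gradx_lip_y (hd : Differentiable ℝ f)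
    (hlip : ∀ p q : WithLp 2 (En n × En m), ‖gradient f p - gradient f q‖ ≤ ℓ * ‖p - q‖)
    (x : En n) (y y' : En m) : ‖gradx f x y - gradx f x y'‖ ≤ ℓ * ‖y - y'‖ := by
  rw [gradx_eq x y (hd _), gradx_eq x y' (hd _)]
  calc ‖(gradient f (pair x y)).fst - (gradient f (pair x y')).fst‖
      = ‖(gradient f (pair x y) - gradient f (pair x y')).fst‖ := rfl
    _ ≤ ‖gradient f (pair x y) - gradient f (pair x y')‖ := norm_fst_le _
    _ ≤ ℓ * ‖pair x y - pair x y'‖ := hlip _ _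
    _ = ℓ * ‖y - y'‖ := by rw [pair_sub, sub_self, norm_pair_right]

lemma grady_lip_x (hd : Differentiable ℝ f)
    (hlip : ∀ p q : WithLp 2 (En n × En m), ‖gradient f p - gradient f q‖ ≤ ℓ * ‖p - q‖)
    (x x' : En n) (y : En m) : ‖grady f x y - grady f x' y‖ ≤ ℓ * ‖x - x'‖ := by
  rw [grady_eq x y (hd _), grady_eq x' y (hd _)]
  calc ‖(gradient f (pair x y)).snd - (gradient f (pair x' y)).snd‖
      = ‖(gradient f (pair x y) - gradient f (pair x' y)).snd‖ := rfl
    _ ≤ ‖gradient f (pair x y) - gradient f (pair x' y)‖ := norm_snd_le _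
    _ ≤ ℓ * ‖pair x y - pair x' y‖ := hlip _ _
    _ = ℓ * ‖x - x'‖ := by rw [pair_sub, sub_self, norm_pair_left]

end S1

open S1 InnerProductSpace

/-- `P(x) = max_y f(x,y)` is differentiable and `∇P` is Lipschitz continuous
with constant `L₁ = (κ + 1)ℓ`, where `κ = ℓ/μ`. -/
theorem statement1 {n m : ℕ} (f : WithLp 2 (En n × En m) → ℝ) (ℓ μ : ℝ)
    (hμ : 0 < μ) (hμℓ : μ ≤ ℓ)
    (hf : ContDiff ℝ 2 f)
    (hlip : ∀ p q : WithLp 2 (En n × En m), ‖gradient f p - gradient f q‖ ≤ ℓ * ‖p - q‖)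
    (hconc : ∀ x : En n, StrongConcaveOn Set.univ μ (fun y => f (pair x y))) :
    Differentiable ℝ (Pmax f) ∧
    ∀ x x' : En n,
      ‖gradient (Pmax f) x - gradient (Pmax f) x'‖ ≤ (ℓ / μ + 1) * ℓ * ‖x - x'‖ := by
  have hℓpos : 0 < ℓ := lt_of_lt_of_le hμ hμℓ
  have hd : Differentiable ℝ f := hf.differentiable (by norm_num)
  have hgd : ∀ x : En n, Differentiable ℝ (fun y => f (pair x y)) := fun x y =>
    (hd (pair x y)).comp y (hasFDerivAt_pair_right x y).differentiableAt
  -- the maximizer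
  have hex : ∀ x : En n, ∃ y0, ∀ y, f (pair x y) ≤ f (pair x y0) := fun x =>
    exists_max hμ (hconc x) (hgd x)
  choose ystar hystar using hex
  -- gradient of partial map vanishes at the maximizer
  have hy0 : ∀ x : En n, grady f x (ystar x) = 0 := fun x =>
    grad_eq_zero_of_max (hgd x) (hystar x)
  -- Lipschitz property of the maximizer
  have key2 : ∀ x x' : En n, μ * ‖ystar x - ystar x'‖ ≤ ℓ * ‖x - x'‖ := by
    intro x x'
    have hmono := strong_concave_grad_mono (hconc x) (hgd x) (ystar x) (ystar x')
    have hmono2 : -⟪grady f x (ystar x'), ystar x - ystar x'⟫ +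
        ⟪grady f x (ystar x), ystar x - ystar x'⟫ ≤ -(μ * ‖ystar x - ystar x'‖ ^ 2) := by
      have e : ⟪grady f x (ystar x) - grady f x (ystar x'), ystar x - ystar x'⟫
          = -⟪grady f x (ystar x'), ystar x - ystar x'⟫ +
            ⟪grady f x (ystar x), ystar x - ystar x'⟫ := by
        rw [inner_sub_left]; ring
      rw [← e]
      exact hmono
    rw [hy0 x, inner_zero_left, add_zero] at hmono2
    have hip : ⟪grady f x (ystar x'), ystar x - ystar x'⟫
        ≤ ℓ * ‖x - x'‖ * ‖ystar x - ystar x'‖ := by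
      have e : grady f x (ystar x') = grady f x (ystar x') - grady f x' (ystar x') := by
        rw [hy0 x', sub_zero]
      rw [e]
      calc ⟪grady f x (ystar x') - grady f x' (ystar x'), ystar x - ystar x'⟫
          ≤ ‖grady f x (ystar x') - grady f x' (ystar x')‖ * ‖ystar x - ystar x'‖ :=
            real_inner_le_norm _ _
        _ ≤ ℓ * ‖x - x'‖ * ‖ystar x - ystar x'‖ :=
            mul_le_mul_of_nonneg_right (grady_lip_x hd hlip x x' _) (norm_nonneg _)
    by_cases hz : ‖ystar x - ystar x'‖ = 0
    · rw [hz, mul_zero]; positivity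
    · have hpos : 0 < ‖ystar x - ystar x'‖ := (norm_nonneg _).lt_of_ne (Ne.symm hz)
      nlinarith [hmono2, hip]
  -- value of Pmax
  have hbdd : ∀ x : En n, BddAbove (Set.range fun y => f (pair x y)) := fun x =>
    ⟨f (pair x (ystar x)), by rintro _ ⟨y, rfl⟩; exact hystar x y⟩
  have hPval : ∀ x : En n, Pmax f x = f (pair x (ystar x)) := by
    intro x
    exact le_antisymm (ciSup_le (hystar x)) (le_ciSup (hbdd x) (ystar x))
  -- descent lemma specialized
  have hdesc : ∀ (y : En m) (a b : En n),
      |f (pair b y) - f (pair a y) - ⟪gradx f a y, b - a⟫| ≤ ℓ / 2 * ‖b - a‖ ^ 2 := by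
    intro y a b
    have hq : Differentiable ℝ (fun u : En n => f (pair u y)) := fun u =>
      (hd (pair u y)).comp u (hasFDerivAt_pair_left u y).differentiableAt
    have hL : ∀ u u' : En n,
        ‖gradient (fun u : En n => f (pair u y)) u -
          gradient (fun u : En n => f (pair u y)) u'‖ ≤ ℓ * ‖u - u'‖ := fun u u' =>
      gradx_lip_x hd hlip u u' y
    exact descent_lemma hq hL a b
  -- constant
  obtain ⟨C, hCdef⟩ : ∃ C : ℝ, C = ℓ / μ * ℓ + ℓ / 2 := ⟨_, rfl⟩
  have hC : 0 < C := by rw [hCdef]; positivity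
  -- gradient of Pmax
  have hgradP : ∀ x : En n, HasGradientAt (Pmax f) (gradx f x (ystar x)) x := by
    intro x
    have hpt : ∀ x' : En n,
        |Pmax f x' - Pmax f x - ⟪gradx f x (ystar x), x' - x⟫| ≤ C * ‖x' - x‖ ^ 2 := by
      intro x'
      have hPx : Pmax f x = f (pair x (ystar x)) := hPval x
      have hPx' : Pmax f x' = f (pair x' (ystar x')) := hPval x'
      have hub : f (pair x (ystar x')) ≤ Pmax f x := by rw [hPx]; exact hystar x (ystar x')
      have hub' : f (pair x' (ystar x)) ≤ Pmax f x' := by rw [hPx']; exact hystar x' (ystar x)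
      obtain ⟨l1, u1⟩ := abs_le.1 (hdesc (ystar x) x x')
      obtain ⟨l2, u2⟩ := abs_le.1 (hdesc (ystar x') x x')
      have hyy : μ * ‖ystar x - ystar x'‖ ≤ ℓ * ‖x - x'‖ := key2 x x'
      have hnxx : ‖x - x'‖ = ‖x' - x‖ := norm_sub_rev _ _
      have h5 : ‖ystar x' - ystar x‖ ≤ ℓ / μ * ‖x' - x‖ := by
        rw [div_mul_eq_mul_div, le_div_iff₀ hμ, norm_sub_rev]
        calc ‖ystar x - ystar x'‖ * μ = μ * ‖ystar x - ystar x'‖ := by ring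
          _ ≤ ℓ * ‖x - x'‖ := hyy
          _ = ℓ * ‖x' - x‖ := by rw [hnxx]
      have hip : ⟪gradx f x (ystar x') - gradx f x (ystar x), x' - x⟫
          ≤ ℓ * ‖ystar x' - ystar x‖ * ‖x' - x‖ := by
        calc ⟪gradx f x (ystar x') - gradx f x (ystar x), x' - x⟫
            ≤ ‖gradx f x (ystar x') - gradx f x (ystar x)‖ * ‖x' - x‖ := real_inner_le_norm _ _
          _ ≤ ℓ * ‖ystar x' - ystar x‖ * ‖x' - x‖ :=
              mul_le_mul_of_nonneg_right (gradx_lip_y hd hlip x _ _) (norm_nonneg _)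
      have hsplit : ⟪gradx f x (ystar x'), x' - x⟫ = ⟪gradx f x (ystar x), x' - x⟫ +
          ⟪gradx f x (ystar x') - gradx f x (ystar x), x' - x⟫ := by
        rw [inner_sub_left]; ring
      rw [abs_le]
      have hCge : ℓ / 2 ≤ C := by
        rw [hCdef]
        nlinarith [mul_pos (div_pos hℓpos hμ) hℓpos]
      have hCu : ℓ / μ * ℓ * ‖x' - x‖ ^ 2 + ℓ / 2 * ‖x' - x‖ ^ 2 = C * ‖x' - x‖ ^ 2 := by
        rw [hCdef]; ring
      have hCs : ℓ / 2 * ‖x' - x‖ ^ 2 ≤ C * ‖x' - x‖ ^ 2 :=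
        mul_le_mul_of_nonneg_right hCge (sq_nonneg _)
      constructor
      · have goal1 : f (pair x' (ystar x)) - f (pair x (ystar x)) -
            ⟪gradx f x (ystar x), x' - x⟫ ≤
            Pmax f x' - Pmax f x - ⟪gradx f x (ystar x), x' - x⟫ := by
          linarith [hub', hPx]
        linarith [goal1, l1, hCs]
      · have hp0 : (0:ℝ) ≤ ℓ * ‖x' - x‖ := by positivity
        have hprod : ℓ * ‖ystar x' - ystar x‖ * ‖x' - x‖ ≤ ℓ / μ * ℓ * ‖x' - x‖ ^ 2 := by
          nlinarith [mul_le_mul_of_nonneg_left h5 hp0]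
        linarith [hub, hPx', u2, hip, hsplit, hprod, hCu]
    rw [hasGradientAt_iff_isLittleO, Asymptotics.isLittleO_iff]
    intro c hc
    rw [Metric.eventually_nhds_iff]
    refine ⟨c / C, by positivity, fun x' hx' => ?_⟩
    rw [dist_eq_norm] at hx'
    have h1 := hpt x'
    have h2 : ‖Pmax f x' - Pmax f x - ⟪gradx f x (ystar x), x' - x⟫‖
        = |Pmax f x' - Pmax f x - ⟪gradx f x (ystar x), x' - x⟫| := Real.norm_eq_abs _
    rw [h2]
    have h4 : C * ‖x' - x‖ ≤ c := by
      calc C * ‖x' - x‖ ≤ C * (c / C) := mul_le_mul_of_nonneg_left hx'.le hC.le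
        _ = c := by field_simp
    calc |Pmax f x' - Pmax f x - ⟪gradx f x (ystar x), x' - x⟫|
        ≤ C * ‖x' - x‖ ^ 2 := h1
      _ = (C * ‖x' - x‖) * ‖x' - x‖ := by ring
      _ ≤ c * ‖x' - x‖ := mul_le_mul_of_nonneg_right h4 (norm_nonneg _)
  refine ⟨fun x => (hgradP x).differentiableAt, fun x x' => ?_⟩
  rw [(hgradP x).gradient, (hgradP x').gradient]
  have t1 : ‖gradx f x (ystar x) - gradx f x' (ystar x)‖ ≤ ℓ * ‖x - x'‖ :=
    gradx_lip_x hd hlip x x' (ystar x)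
  have t2 : ‖gradx f x' (ystar x) - gradx f x' (ystar x')‖ ≤ ℓ * ‖ystar x - ystar x'‖ :=
    gradx_lip_y hd hlip x' (ystar x) (ystar x')
  have hyy := key2 x x'
  have h5 : ‖ystar x - ystar x'‖ ≤ ℓ / μ * ‖x - x'‖ := by
    rw [div_mul_eq_mul_div, le_div_iff₀ hμ]
    calc ‖ystar x - ystar x'‖ * μ = μ * ‖ystar x - ystar x'‖ := by ring
      _ ≤ ℓ * ‖x - x'‖ := hyy
  calc ‖gradx f x (ystar x) - gradx f x' (ystar x')‖
      ≤ ‖gradx f x (ystar x) - gradx f x' (ystar x)‖ +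
        ‖gradx f x' (ystar x) - gradx f x' (ystar x')‖ := norm_sub_le_norm_sub_add_norm_sub _ _ _
    _ ≤ (ℓ / μ + 1) * ℓ * ‖x - x'‖ := by nlinarith [mul_le_mul_of_nonneg_left h5 hℓpos.le]
end
end

section
/- A vector s ∈ ℝⁿ is a global minimizer of the trust-region subproblem min_{‖s‖ ≤ R} gᵀs + ½ sᵀ(H + σ‖g‖^{1/2} I)s if and only if there exists a dual multiplier λ ≥ 0 such that: (i) ‖s‖ ≤ R; (ii) λ(‖s‖ − R) = 0; (iii) (H + σ‖g‖^{1/2} I + λ I)s = −g; and (iv) the operator H + σ‖g‖^{1/2} I + λ I is positive semidefinite. -/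
noncomputable section

open RealInnerProductSpace

private lemma aux_nonneg (a b c t₀ : ℝ) (ht₀ : 0 < t₀)
    (h : ∀ t : ℝ, 0 < t → t ≤ t₀ → 0 ≤ a + t * b + t ^ 2 * c) : 0 ≤ a := by
  have hc : Filter.Tendsto (fun t : ℝ => a + t * b + t ^ 2 * c)
      (nhdsWithin 0 (Set.Ioi 0)) (nhds a) := by
    have hcont : Continuous fun t : ℝ => a + t * b + t ^ 2 * c := by continuity
    have := hcont.tendsto 0
    simpa using this.mono_left nhdsWithin_le_nhds
  refine ge_of_tendsto hc ?_
  filter_upwards [Ioc_mem_nhdsGT ht₀] with t ht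
  exact h t ht.1 ht.2

set_option maxHeartbeats 1600000 in
/-- `s` is a global minimizer of the trust-region subproblem
`min_{‖s‖ ≤ R} gᵀs + ½ sᵀ(H + σ‖g‖^{1/2} I)s` iff there is a dual multiplier `λ ≥ 0` with
(i) `‖s‖ ≤ R`, (ii) `λ(‖s‖ − R) = 0`, (iii) `(H + σ‖g‖^{1/2}I + λI)s = −g`, and
(iv) `H + σ‖g‖^{1/2}I + λI ⪰ 0`. -/
theorem statement4 {n : ℕ} (H : En n →L[ℝ] En n) (hH : IsSelfAdjoint H)
    (g : En n) (σ R : ℝ) (hσ : 0 ≤ σ) (hR : 0 < R) (s : En n) :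
    (‖s‖ ≤ R ∧ ∀ s' : En n, ‖s'‖ ≤ R →
        ⟪g, s⟫ + 1 / 2 * ⟪(H + (σ * Real.sqrt ‖g‖) • (1 : En n →L[ℝ] En n)) s, s⟫ ≤
          ⟪g, s'⟫ + 1 / 2 * ⟪(H + (σ * Real.sqrt ‖g‖) • (1 : En n →L[ℝ] En n)) s', s'⟫) ↔
      (∃ lam : ℝ, 0 ≤ lam ∧
        ‖s‖ ≤ R ∧
        lam * (‖s‖ - R) = 0 ∧
        (H + (σ * Real.sqrt ‖g‖) • (1 : En n →L[ℝ] En n) + lam • 1) s = -g ∧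
        ∀ v : En n,
          0 ≤ ⟪(H + (σ * Real.sqrt ‖g‖) • (1 : En n →L[ℝ] En n) + lam • 1) v, v⟫) := by
  set A := H + (σ * Real.sqrt ‖g‖) • (1 : En n →L[ℝ] En n) with hAdef
  have hA : ∀ x y : En n, ⟪A x, y⟫ = ⟪x, A y⟫ := by
    intro x y
    have h1 := hH.isSymmetric x y
    simp only [hAdef, ContinuousLinearMap.add_apply, ContinuousLinearMap.smul_apply,
      ContinuousLinearMap.one_apply, inner_add_left, inner_add_right, real_inner_smul_left,
      real_inner_smul_right]
    simp only [ContinuousLinearMap.coe_coe] at h1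
    rw [h1]
  have hsym : ∀ x y : En n, ⟪A x, y⟫ = ⟪A y, x⟫ := by
    intro x y; rw [hA, real_inner_comm]
  have expand : ∀ (w v : En n) (t : ℝ),
      ⟪g, w + t • v⟫ + 1/2 * ⟪A (w + t • v), w + t • v⟫
        = (⟪g, w⟫ + 1/2 * ⟪A w, w⟫) + t * (⟪g, v⟫ + ⟪A w, v⟫)
          + t ^ 2 * (1/2 * ⟪A v, v⟫) := by
    intro w v t
    simp only [map_add, map_smul, inner_add_left, inner_add_right, real_inner_smul_left,
      real_inner_smul_right]
    rw [hsym v w]; ring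
  have normsq : ∀ (w v : En n) (t : ℝ),
      ‖w + t • v‖ ^ 2 = ‖w‖ ^ 2 + 2 * t * ⟪w, v⟫ + t ^ 2 * ‖v‖ ^ 2 := by
    intro w v t
    rw [← real_inner_self_eq_norm_sq, ← real_inner_self_eq_norm_sq,
      ← real_inner_self_eq_norm_sq]
    simp only [inner_add_left, inner_add_right, real_inner_smul_left, real_inner_smul_right,
      real_inner_comm w v]
    ring
  constructor
  · rintro ⟨hsR, hmin⟩
    by_cases hint : ‖s‖ < R
    · -- interior case: lam = 0
      have key : ∀ v : En n, (⟪g, v⟫ + ⟪A s, v⟫ = 0) ∧ 0 ≤ ⟪A v, v⟫ := by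
        intro v
        rcases eq_or_ne v 0 with rfl | hv
        · simp
        · have hvn : 0 < ‖v‖ := norm_pos_iff.mpr hv
          set δ := (R - ‖s‖) / ‖v‖ with hδ
          have hδpos : 0 < δ := div_pos (by linarith) hvn
          have hmem : ∀ t : ℝ, |t| ≤ δ → ‖s + t • v‖ ≤ R := by
            intro t ht
            have h1 : |t| * ‖v‖ ≤ R - ‖s‖ := (le_div_iff₀ hvn).mp ht
            calc ‖s + t • v‖ ≤ ‖s‖ + ‖t • v‖ := norm_add_le _ _
              _ = ‖s‖ + |t| * ‖v‖ := by rw [norm_smul, Real.norm_eq_abs]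
              _ ≤ R := by linarith
          have step : ∀ u : En n, (∀ t : ℝ, 0 < t → t ≤ δ → ‖s + t • u‖ ≤ R) →
              0 ≤ ⟪g, u⟫ + ⟪A s, u⟫ := by
            intro u hu
            apply aux_nonneg _ (1/2 * ⟪A u, u⟫) 0 δ hδpos
            intro t ht1 ht2
            have hq := hmin _ (hu t ht1 ht2)
            rw [expand s u t] at hq
            have h2' : 0 ≤ t * ((⟪g, u⟫ + ⟪A s, u⟫) + t * (1/2 * ⟪A u, u⟫)) := by nlinarith
            have h3 := (mul_nonneg_iff_of_pos_left ht1).mp h2'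
            nlinarith
          have hpos := step v (fun t ht1 ht2 => hmem t (by rw [abs_of_pos ht1]; exact ht2))
          have hneg := step (-v) (fun t ht1 ht2 => by
            have : s + t • (-v) = s + (-t) • v := by module
            rw [this]
            exact hmem (-t) (by rw [abs_neg, abs_of_pos ht1]; exact ht2))
          simp only [inner_neg_right] at hneg
          have hL0 : ⟪g, v⟫ + ⟪A s, v⟫ = 0 := by linarith
          refine ⟨hL0, ?_⟩
          have hq := hmin _ (hmem δ (by rw [abs_of_pos hδpos]))
          rw [expand s v δ] at hq
          have hδ2 : 0 < δ ^ 2 := by positivity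
          nlinarith [hq, hL0, hδ2]
      have hAs : A s = -g := by
        have h0 := (key (A s + g)).1
        have h1 : ⟪A s + g, A s + g⟫ = 0 := by
          rw [inner_add_left]; linarith [h0]
        have h2 : A s + g = 0 := inner_self_eq_zero.mp h1
        exact eq_neg_of_add_eq_zero_left h2
      refine ⟨0, le_refl 0, hsR, by ring, ?_, ?_⟩
      · simp [hAs]
      · intro v
        have := (key v).2
        simpa using this
    · -- boundary case
      have hseq : ‖s‖ = R := le_antisymm hsR (not_lt.mp hint)
      have hs0 : s ≠ 0 := by
        intro h; rw [h, norm_zero] at hseq; linarith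
      set r : En n := g + A s with hrdef
      have hrinner : ∀ v : En n, ⟪r, v⟫ = ⟪g, v⟫ + ⟪A s, v⟫ := by
        intro v; rw [hrdef, inner_add_left]
      have stepA : ∀ v : En n, ⟪s, v⟫ < 0 → 0 ≤ ⟪r, v⟫ := by
        intro v hsv
        have hv0 : v ≠ 0 := by rintro rfl; simp at hsv
        have hvn : 0 < ‖v‖ := norm_pos_iff.mpr hv0
        set t₀ := -⟪s, v⟫ / ‖v‖ ^ 2 with ht₀def
        have ht₀ : 0 < t₀ := div_pos (by linarith) (by positivity)
        have hmem : ∀ t : ℝ, 0 < t → t ≤ t₀ → ‖s + t • v‖ ≤ R := by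
          intro t ht1 ht2
          have h1 : t * ‖v‖ ^ 2 ≤ -⟪s, v⟫ := (le_div_iff₀ (by positivity)).mp ht2
          have h2 : ‖s + t • v‖ ^ 2 ≤ R ^ 2 := by
            rw [normsq, hseq]; nlinarith
          nlinarith [norm_nonneg (s + t • v)]
        rw [hrinner]
        apply aux_nonneg _ (1/2 * ⟪A v, v⟫) 0 t₀ ht₀
        intro t ht1 ht2
        have hq := hmin _ (hmem t ht1 ht2)
        rw [expand s v t] at hq
        have h2' : 0 ≤ t * ((⟪g, v⟫ + ⟪A s, v⟫) + t * (1/2 * ⟪A v, v⟫)) := by nlinarith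
        have h3 := (mul_nonneg_iff_of_pos_left ht1).mp h2'
        nlinarith
      have stepB : ∀ v : En n, ⟪s, v⟫ = 0 → ⟪r, v⟫ = 0 := by
        have h1 : ∀ u : En n, ⟪s, u⟫ = 0 → 0 ≤ ⟪r, u⟫ := by
          intro u hu
          apply aux_nonneg _ (-⟪r, s⟫) 0 1 one_pos
          intro t ht1 _
          have hlt : ⟪s, u - t • s⟫ < 0 := by
            rw [inner_sub_right, real_inner_smul_right, hu, real_inner_self_eq_norm_sq, hseq]
            nlinarith [mul_pos ht1 (pow_pos hR 2)]
          have h2 := stepA _ hlt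
          rw [inner_sub_right, real_inner_smul_right] at h2
          nlinarith
        intro v hv
        have ha := h1 v hv
        have hb := h1 (-v) (by rw [inner_neg_right, hv]; ring)
        rw [inner_neg_right] at hb; linarith
      set μ := ⟪s, r⟫ / R ^ 2 with hμdef
      have hperp : ⟪s, r - μ • s⟫ = 0 := by
        rw [inner_sub_right, real_inner_smul_right, real_inner_self_eq_norm_sq, hseq, hμdef]
        field_simp
        ring
      have hr : r = μ • s := by
        have h1 := stepB _ hperp
        have h2 : ⟪r - μ • s, r - μ • s⟫ = 0 := by
          rw [inner_sub_left, real_inner_smul_left, h1, hperp]; ring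
        have h3 : r - μ • s = 0 := inner_self_eq_zero.mp h2
        exact sub_eq_zero.mp h3
      have hrs : ⟪r, s⟫ = μ * R ^ 2 := by
        rw [hr, real_inner_smul_left, real_inner_self_eq_norm_sq, hseq]
      have hμneg : μ ≤ 0 := by
        have h1 : ⟪s, -s⟫ < 0 := by
          rw [inner_neg_right, real_inner_self_eq_norm_sq, hseq]; nlinarith
        have h2 := stepA _ h1
        rw [inner_neg_right, hrs] at h2
        nlinarith [pow_pos hR 2]
      have hAs : A s = μ • s - g := by
        have : g + A s = μ • s := by rw [← hrdef, hr]
        have h2 : A s = μ • s - g := by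
          rw [← this]; abel
        exact h2
      have hAsw : ∀ w : En n, ⟪A s, w⟫ = μ * ⟪s, w⟫ - ⟪g, w⟫ := by
        intro w; rw [hAs, inner_sub_left, real_inner_smul_left]
      have hAss : ⟪A s, s⟫ = μ * R ^ 2 - ⟪g, s⟫ := by
        rw [hAsw, real_inner_self_eq_norm_sq, hseq]
      -- sphere condition
      have sphere : ∀ w : En n, ‖w‖ = R → 0 ≤ ⟪A (w - s), w - s⟫ - μ * ‖w - s‖ ^ 2 := by
        intro w hw
        have hq := hmin w hw.le
        have e1 : ⟪A (w - s), w - s⟫ = ⟪A w, w⟫ - 2 * ⟪A s, w⟫ + ⟪A s, s⟫ := by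
          rw [map_sub, inner_sub_left, inner_sub_right, inner_sub_right, hsym w s]
          ring
        have e2 := hAsw w
        have e4 : ‖w - s‖ ^ 2 = R ^ 2 - 2 * ⟪s, w⟫ + R ^ 2 := by
          rw [← real_inner_self_eq_norm_sq, inner_sub_left, inner_sub_right, inner_sub_right,
            real_inner_self_eq_norm_sq, real_inner_self_eq_norm_sq, hw, hseq,
            real_inner_comm w s]
          ring
        have e4' : μ * ‖w - s‖ ^ 2 = μ * R ^ 2 - 2 * (μ * ⟪s, w⟫) + μ * R ^ 2 := by
          rw [e4]; ring
        rw [e1, e2, hAss, e4']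
        nlinarith [hq]
      -- PSD for all directions
      have key2 : ∀ u : En n, ⟪s, u⟫ ≠ 0 → 0 ≤ ⟪A u, u⟫ - μ * ‖u‖ ^ 2 := by
        intro u hsu
        have hu0 : u ≠ 0 := by rintro rfl; simp at hsu
        have hun : (0:ℝ) < ‖u‖ ^ 2 := pow_pos (norm_pos_iff.mpr hu0) 2
        set t := -2 * ⟪s, u⟫ / ‖u‖ ^ 2 with htdef
        have ht : t ≠ 0 := by
          rw [htdef]
          exact div_ne_zero (by intro h; apply hsu; linarith) (by positivity)
        have hwsq : ‖s + t • u‖ ^ 2 = R ^ 2 := by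
          rw [normsq, hseq, htdef]
          field_simp
          ring
        have hw : ‖s + t • u‖ = R := by
          have h := congrArg Real.sqrt hwsq
          rwa [Real.sqrt_sq (norm_nonneg _), Real.sqrt_sq hR.le] at h
        have hsp := sphere _ hw
        have hws : (s + t • u) - s = t • u := by abel
        rw [hws, map_smul, real_inner_smul_left, real_inner_smul_right, norm_smul,
          Real.norm_eq_abs, mul_pow, sq_abs] at hsp
        have ht2 : 0 < t ^ 2 := pow_two_pos_of_ne_zero ht
        nlinarith
      have main : ∀ v : En n, 0 ≤ ⟪A v, v⟫ - μ * ‖v‖ ^ 2 := by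
        intro v
        by_cases hsv : ⟪s, v⟫ = 0
        · apply aux_nonneg _ (2 * ⟪A v, s⟫ - μ * (2 * ⟪v, s⟫)) (⟪A s, s⟫ - μ * ‖s‖ ^ 2) 1
            one_pos
          intro t ht1 _
          have hne : ⟪s, v + t • s⟫ ≠ 0 := by
            rw [inner_add_right, real_inner_smul_right, hsv, real_inner_self_eq_norm_sq, hseq]
            have : 0 < t * R ^ 2 := mul_pos ht1 (pow_pos hR 2)
            intro h; rw [zero_add] at h; linarith
          have h1 := key2 _ hne
          have e1 : ⟪A (v + t • s), v + t • s⟫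
              = ⟪A v, v⟫ + t * (2 * ⟪A v, s⟫) + t ^ 2 * ⟪A s, s⟫ := by
            simp only [map_add, map_smul, inner_add_left, inner_add_right,
              real_inner_smul_left, real_inner_smul_right]
            rw [hsym s v]; ring
          have e2 := normsq v s t
          rw [e1, e2] at h1
          nlinarith
        · exact key2 v hsv
      refine ⟨-μ, by linarith, hsR, by rw [hseq]; ring, ?_, ?_⟩
      · have happ : (A + (-μ) • (1 : En n →L[ℝ] En n)) s = A s + (-μ) • s := by
          simp
        rw [happ, hAs]; module
      · intro v
        have happ : (A + (-μ) • (1 : En n →L[ℝ] En n)) v = A v + (-μ) • v := by simp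
        rw [happ, inner_add_left, real_inner_smul_left, real_inner_self_eq_norm_sq]
        have := main v
        linarith
  · rintro ⟨lam, hlam, hsR, hcompl, heq, hpsd⟩
    refine ⟨hsR, ?_⟩
    intro w hw
    have hAs : A s = -g - lam • s := by
      have h1 : (A + lam • (1 : En n →L[ℝ] En n)) s = A s + lam • s := by simp
      rw [h1] at heq
      rw [← heq]; abel
    have hAsw : ∀ u : En n, ⟪A s, u⟫ = -⟪g, u⟫ - lam * ⟪s, u⟫ := by
      intro u
      rw [hAs, inner_sub_left, inner_neg_left, real_inner_smul_left]
    have hp := hpsd (w - s)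
    have h1 : (A + lam • (1 : En n →L[ℝ] En n)) (w - s) = A (w - s) + lam • (w - s) := by simp
    rw [h1, inner_add_left, real_inner_smul_left, real_inner_self_eq_norm_sq] at hp
    have e1 : ⟪A (w - s), w - s⟫ = ⟪A w, w⟫ - 2 * ⟪A s, w⟫ + ⟪A s, s⟫ := by
      rw [map_sub, inner_sub_left, inner_sub_right, inner_sub_right, hsym w s]
      ring
    have e2 := hAsw w
    have e3 : ⟪A s, s⟫ = -⟪g, s⟫ - lam * ‖s‖ ^ 2 := by
      rw [hAsw, real_inner_self_eq_norm_sq]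
    have e4 : ‖w - s‖ ^ 2 = ‖w‖ ^ 2 - 2 * ⟪s, w⟫ + ‖s‖ ^ 2 := by
      rw [← real_inner_self_eq_norm_sq, inner_sub_left, inner_sub_right, inner_sub_right,
        real_inner_self_eq_norm_sq, real_inner_self_eq_norm_sq, real_inner_comm w s]
      ring
    have e4' : lam * ‖w - s‖ ^ 2 = lam * ‖w‖ ^ 2 - 2 * (lam * ⟪s, w⟫) + lam * ‖s‖ ^ 2 := by
      rw [e4]; ring
    have e5 : lam * ‖w‖ ^ 2 ≤ lam * ‖s‖ ^ 2 := by
      rcases mul_eq_zero.mp hcompl with h | h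
      · rw [h]; simp
      · have hs : ‖s‖ = R := by linarith [sub_eq_zero.mp h]
        rw [hs]
        exact mul_le_mul_of_nonneg_left (pow_le_pow_left₀ (norm_nonneg w) hw 2) hlam
    rw [e1, e2, e3, e4'] at hp
    linarith
end
end

section
/- For all x ∈ ℝⁿ and y ∈ ℝᵐ, the gradient and Hessian estimation errors satisfy ‖∇P(x) − ∇_x f(x,y)‖ ≤ ℓ‖y − y*(x)‖ and ‖∇²P(x) − H(x,y)‖ ≤ L_H ‖y − y*(x)‖, where L_H = ρ(1+κ)² and the second norm is the operator norm. -/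
noncomputable section

open RealInnerProductSpace

namespace S5

variable {n m : ℕ}

def inlL (n m : ℕ) : En n →L[ℝ] WithLp 2 (En n × En m) :=
  ((WithLp.prodContinuousLinearEquiv 2 ℝ (En n) (En m)).symm :
    (En n × En m) →L[ℝ] WithLp 2 (En n × En m)).comp (ContinuousLinearMap.inl ℝ (En n) (En m))

def inrL (n m : ℕ) : En m →L[ℝ] WithLp 2 (En n × En m) :=
  ((WithLp.prodContinuousLinearEquiv 2 ℝ (En n) (En m)).symm :
    (En n × En m) →L[ℝ] WithLp 2 (En n × En m)).comp (ContinuousLinearMap.inr ℝ (En n) (En m))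

def fstL (n m : ℕ) : WithLp 2 (En n × En m) →L[ℝ] En n :=
  (ContinuousLinearMap.fst ℝ (En n) (En m)).comp
    ((WithLp.prodContinuousLinearEquiv 2 ℝ (En n) (En m)) :
      WithLp 2 (En n × En m) →L[ℝ] (En n × En m))

def sndL (n m : ℕ) : WithLp 2 (En n × En m) →L[ℝ] En m :=
  (ContinuousLinearMap.snd ℝ (En n) (En m)).comp
    ((WithLp.prodContinuousLinearEquiv 2 ℝ (En n) (En m)) :
      WithLp 2 (En n × En m) →L[ℝ] (En n × En m))

@[simp] lemma inlL_apply (v : En n) : inlL n m v = pair v 0 := rfl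
@[simp] lemma inrL_apply (w : En m) : inrL n m w = pair 0 w := rfl
@[simp] lemma fstL_apply (z : WithLp 2 (En n × En m)) : fstL n m z = z.fst := rfl
@[simp] lemma sndL_apply (z : WithLp 2 (En n × En m)) : sndL n m z = z.snd := rfl
@[simp] lemma pair_fst (x : En n) (y : En m) : (pair x y).fst = x := rfl
@[simp] lemma pair_snd (x : En n) (y : En m) : (pair x y).snd = y := rfl

lemma pair_add (x x' : En n) (y y' : En m) :
    pair x y + pair x' y' = pair (x + x') (y + y') := rfl

lemma inner_pair (a : En n) (b : En m) (c : En n) (d : En m) :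
    ⟪pair a b, pair c d⟫ = ⟪a, c⟫ + ⟪b, d⟫ :=
  WithLp.prod_inner_apply _ _

variable {f : WithLp 2 (En n × En m) → ℝ}

lemma pairx_hasFDerivAt (y : En m) (x : En n) :
    HasFDerivAt (fun x' => pair x' y) (inlL n m) x := by
  have h : (fun x' : En n => pair x' y) = fun x' => inlL n m x' + pair 0 y := by
    funext x'; rw [inlL_apply, pair_add]; simp
  rw [h]
  exact (inlL n m).hasFDerivAt.add_const _

lemma pairy_hasFDerivAt (x : En n) (y : En m) :
    HasFDerivAt (fun y' => pair x y') (inrL n m) y := by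
  have h : (fun y' : En m => pair x y') = fun y' => inrL n m y' + pair x 0 := by
    funext y'; rw [inrL_apply, pair_add]; simp
  rw [h]
  exact (inrL n m).hasFDerivAt.add_const _

lemma diff_f (hf : ContDiff ℝ 2 f) : Differentiable ℝ f := hf.differentiable (by norm_num)

lemma inner_gradient (p u : WithLp 2 (En n × En m)) :
    ⟪gradient f p, u⟫ = fderiv ℝ f p u :=
  InnerProductSpace.toDual_symm_apply

lemma gradx_eq (hf : ContDiff ℝ 2 f) (x : En n) (y : En m) :
    gradx f x y = fstL n m (gradient f (pair x y)) := by
  have h1 : HasFDerivAt (fun x' => f (pair x' y))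
      ((fderiv ℝ f (pair x y)).comp (inlL n m)) x :=
    ((diff_f hf (pair x y)).hasFDerivAt).comp x (pairx_hasFDerivAt y x)
  have h2 : HasGradientAt (fun x' => f (pair x' y)) (fstL n m (gradient f (pair x y))) x := by
    rw [hasGradientAt_iff_hasFDerivAt]
    refine h1.congr_fderiv ?_
    ext v
    rw [InnerProductSpace.toDual_apply_apply]
    have : (fderiv ℝ f (pair x y)).comp (inlL n m) v = fderiv ℝ f (pair x y) (pair v 0) := rfl
    rw [this, ← inner_gradient]
    rw [show gradient f (pair x y) = pair (gradient f (pair x y)).fst (gradient f (pair x y)).snd from rfl,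
      inner_pair]
    simp
  exact (h1.differentiableAt.hasGradientAt.unique h2)

lemma grady_eq (hf : ContDiff ℝ 2 f) (x : En n) (y : En m) :
    grady f x y = sndL n m (gradient f (pair x y)) := by
  have h1 : HasFDerivAt (fun y' => f (pair x y'))
      ((fderiv ℝ f (pair x y)).comp (inrL n m)) y :=
    ((diff_f hf (pair x y)).hasFDerivAt).comp y (pairy_hasFDerivAt x y)
  have h2 : HasGradientAt (fun y' => f (pair x y')) (sndL n m (gradient f (pair x y))) y := by
    rw [hasGradientAt_iff_hasFDerivAt]
    refine h1.congr_fderiv ?_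
    ext v
    rw [InnerProductSpace.toDual_apply_apply]
    have : (fderiv ℝ f (pair x y)).comp (inrL n m) v = fderiv ℝ f (pair x y) (pair 0 v) := rfl
    rw [this, ← inner_gradient]
    rw [show gradient f (pair x y) = pair (gradient f (pair x y)).fst (gradient f (pair x y)).snd from rfl,
      inner_pair]
    simp
  exact (h1.differentiableAt.hasGradientAt.unique h2)

lemma gradf_contDiff (hf : ContDiff ℝ 2 f) : ContDiff ℝ 1 (gradient f) := by
  have h1 : ContDiff ℝ 1 (fderiv ℝ f) := hf.fderiv_right (by norm_num)
  exact ((InnerProductSpace.toDual ℝ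
    (WithLp 2 (En n × En m))).symm.toContinuousLinearEquiv.contDiff).comp h1

lemma gradf_diff (hf : ContDiff ℝ 2 f) : Differentiable ℝ (gradient f) :=
  (gradf_contDiff hf).differentiable one_ne_zero


lemma hasFDerivAt_gradx_x (hf : ContDiff ℝ 2 f) (x : En n) (y : En m) :
    HasFDerivAt (fun x' => gradx f x' y)
      ((fstL n m).comp ((fderiv ℝ (gradient f) (pair x y)).comp (inlL n m))) x := by
  have h : (fun x' => gradx f x' y) = fun x' => fstL n m (gradient f (pair x' y)) :=
    funext fun x' => gradx_eq hf x' y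
  rw [h]
  exact ((fstL n m).hasFDerivAt).comp x
    (((gradf_diff hf (pair x y)).hasFDerivAt).comp (g := gradient f) x (pairx_hasFDerivAt y x))

lemma hasFDerivAt_gradx_y (hf : ContDiff ℝ 2 f) (x : En n) (y : En m) :
    HasFDerivAt (fun y' => gradx f x y')
      ((fstL n m).comp ((fderiv ℝ (gradient f) (pair x y)).comp (inrL n m))) y := by
  have h : (fun y' => gradx f x y') = fun y' => fstL n m (gradient f (pair x y')) :=
    funext fun y' => gradx_eq hf x y'
  rw [h]
  exact ((fstL n m).hasFDerivAt).comp y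
    (((gradf_diff hf (pair x y)).hasFDerivAt).comp y (pairy_hasFDerivAt x y))

lemma hasFDerivAt_grady_x (hf : ContDiff ℝ 2 f) (x : En n) (y : En m) :
    HasFDerivAt (fun x' => grady f x' y)
      ((sndL n m).comp ((fderiv ℝ (gradient f) (pair x y)).comp (inlL n m))) x := by
  have h : (fun x' => grady f x' y) = fun x' => sndL n m (gradient f (pair x' y)) :=
    funext fun x' => grady_eq hf x' y
  rw [h]
  exact ((sndL n m).hasFDerivAt).comp x
    (((gradf_diff hf (pair x y)).hasFDerivAt).comp (g := gradient f) x (pairx_hasFDerivAt y x))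

lemma hasFDerivAt_grady_y (hf : ContDiff ℝ 2 f) (x : En n) (y : En m) :
    HasFDerivAt (fun y' => grady f x y')
      ((sndL n m).comp ((fderiv ℝ (gradient f) (pair x y)).comp (inrL n m))) y := by
  have h : (fun y' => grady f x y') = fun y' => sndL n m (gradient f (pair x y')) :=
    funext fun y' => grady_eq hf x y'
  rw [h]
  exact ((sndL n m).hasFDerivAt).comp y
    (((gradf_diff hf (pair x y)).hasFDerivAt).comp y (pairy_hasFDerivAt x y))

lemma Hxx_eq (hf : ContDiff ℝ 2 f) (x : En n) (y : En m) :
    Hxx f x y = (fstL n m).comp ((fderiv ℝ (gradient f) (pair x y)).comp (inlL n m)) :=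
  (hasFDerivAt_gradx_x hf x y).fderiv

lemma Hxy_eq (hf : ContDiff ℝ 2 f) (x : En n) (y : En m) :
    Hxy f x y = (fstL n m).comp ((fderiv ℝ (gradient f) (pair x y)).comp (inrL n m)) :=
  (hasFDerivAt_gradx_y hf x y).fderiv

lemma Hyx_eq (hf : ContDiff ℝ 2 f) (x : En n) (y : En m) :
    Hyx f x y = (sndL n m).comp ((fderiv ℝ (gradient f) (pair x y)).comp (inlL n m)) :=
  (hasFDerivAt_grady_x hf x y).fderiv

lemma Hyy_eq (hf : ContDiff ℝ 2 f) (x : En n) (y : En m) :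
    Hyy f x y = (sndL n m).comp ((fderiv ℝ (gradient f) (pair x y)).comp (inrL n m)) :=
  (hasFDerivAt_grady_y hf x y).fderiv

lemma norm_fst_le (z : WithLp 2 (En n × En m)) : ‖z.fst‖ ≤ ‖z‖ := by
  have h := WithLp.prod_norm_sq_eq_of_L2 z
  have h1 : ‖z.fst‖ ^ 2 ≤ ‖z‖ ^ 2 := by nlinarith [sq_nonneg ‖z.snd‖]
  calc ‖z.fst‖ = Real.sqrt (‖z.fst‖ ^ 2) := (Real.sqrt_sq (norm_nonneg _)).symm
    _ ≤ Real.sqrt (‖z‖ ^ 2) := Real.sqrt_le_sqrt h1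
    _ = ‖z‖ := Real.sqrt_sq (norm_nonneg _)

lemma norm_snd_le (z : WithLp 2 (En n × En m)) : ‖z.snd‖ ≤ ‖z‖ := by
  have h := WithLp.prod_norm_sq_eq_of_L2 z
  have h1 : ‖z.snd‖ ^ 2 ≤ ‖z‖ ^ 2 := by nlinarith [sq_nonneg ‖z.fst‖]
  calc ‖z.snd‖ = Real.sqrt (‖z.snd‖ ^ 2) := (Real.sqrt_sq (norm_nonneg _)).symm
    _ ≤ Real.sqrt (‖z‖ ^ 2) := Real.sqrt_le_sqrt h1
    _ = ‖z‖ := Real.sqrt_sq (norm_nonneg _)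

lemma norm_pair_left (x : En n) : ‖pair x (0 : En m)‖ = ‖x‖ :=
  WithLp.norm_toLp_fst 2 (En n) (En m) x

lemma norm_pair_right (y : En m) : ‖pair (0 : En n) y‖ = ‖y‖ :=
  WithLp.norm_toLp_snd 2 (En n) (En m) y

lemma pair_sub (x x' : En n) (y y' : En m) :
    pair x y - pair x' y' = pair (x - x') (y - y') := rfl

lemma norm_pair_sub_right (x : En n) (y y' : En m) : ‖pair x y - pair x y'‖ = ‖y - y'‖ := by
  rw [pair_sub, sub_self]; exact norm_pair_right _

lemma norm_pair_sub_left (x x' : En n) (y : En m) : ‖pair x y - pair x' y‖ = ‖x - x'‖ := by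
  rw [pair_sub, sub_self]; exact norm_pair_left _

variable {ℓ : ℝ}

lemma normD_le (hℓ : 0 ≤ ℓ)
    (hlip : ∀ p q : WithLp 2 (En n × En m), ‖gradient f p - gradient f q‖ ≤ ℓ * ‖p - q‖)
    (p : WithLp 2 (En n × En m)) : ‖fderiv ℝ (gradient f) p‖ ≤ ℓ := by
  have hlw : LipschitzWith (Real.toNNReal ℓ) (gradient f) := by
    apply LipschitzWith.of_dist_le_mul
    intro a b
    rw [dist_eq_norm, dist_eq_norm, Real.coe_toNNReal ℓ hℓ]
    exact hlip a b
  calc ‖fderiv ℝ (gradient f) p‖ ≤ (Real.toNNReal ℓ : ℝ) := norm_fderiv_le_of_lipschitz ℝ hlw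
    _ = ℓ := Real.coe_toNNReal ℓ hℓ

lemma norm_Hxy_le (hf : ContDiff ℝ 2 f) (hℓ : 0 ≤ ℓ)
    (hlip : ∀ p q : WithLp 2 (En n × En m), ‖gradient f p - gradient f q‖ ≤ ℓ * ‖p - q‖)
    (x : En n) (y : En m) : ‖Hxy f x y‖ ≤ ℓ := by
  rw [Hxy_eq hf]
  refine ContinuousLinearMap.opNorm_le_bound _ hℓ fun w => ?_
  calc ‖fstL n m ((fderiv ℝ (gradient f) (pair x y)) (inrL n m w))‖
      ≤ ‖(fderiv ℝ (gradient f) (pair x y)) (inrL n m w)‖ := by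
        rw [fstL_apply]; exact norm_fst_le _
    _ ≤ ‖fderiv ℝ (gradient f) (pair x y)‖ * ‖inrL n m w‖ :=
        (fderiv ℝ (gradient f) (pair x y)).le_opNorm _
    _ = ‖fderiv ℝ (gradient f) (pair x y)‖ * ‖w‖ := by
        rw [inrL_apply, norm_pair_right]
    _ ≤ ℓ * ‖w‖ := by
        have := normD_le hℓ hlip (pair x y)
        exact mul_le_mul_of_nonneg_right this (norm_nonneg _)

lemma norm_Hyx_le (hf : ContDiff ℝ 2 f) (hℓ : 0 ≤ ℓ)
    (hlip : ∀ p q : WithLp 2 (En n × En m), ‖gradient f p - gradient f q‖ ≤ ℓ * ‖p - q‖)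
    (x : En n) (y : En m) : ‖Hyx f x y‖ ≤ ℓ := by
  rw [Hyx_eq hf]
  refine ContinuousLinearMap.opNorm_le_bound _ hℓ fun w => ?_
  calc ‖sndL n m ((fderiv ℝ (gradient f) (pair x y)) (inlL n m w))‖
      ≤ ‖(fderiv ℝ (gradient f) (pair x y)) (inlL n m w)‖ := by
        rw [sndL_apply]; exact norm_snd_le _
    _ ≤ ‖fderiv ℝ (gradient f) (pair x y)‖ * ‖inlL n m w‖ :=
        (fderiv ℝ (gradient f) (pair x y)).le_opNorm _
    _ = ‖fderiv ℝ (gradient f) (pair x y)‖ * ‖w‖ := by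
        rw [inlL_apply, norm_pair_left]
    _ ≤ ℓ * ‖w‖ := by
        have := normD_le hℓ hlip (pair x y)
        exact mul_le_mul_of_nonneg_right this (norm_nonneg _)

lemma gradx_sub_le (hf : ContDiff ℝ 2 f)
    (hlip : ∀ p q : WithLp 2 (En n × En m), ‖gradient f p - gradient f q‖ ≤ ℓ * ‖p - q‖)
    (x x' : En n) (y y' : En m) :
    ‖gradx f x y - gradx f x' y'‖ ≤ ℓ * ‖pair x y - pair x' y'‖ := by
  rw [gradx_eq hf, gradx_eq hf, ← map_sub]
  calc ‖fstL n m (gradient f (pair x y) - gradient f (pair x' y'))‖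
      ≤ ‖gradient f (pair x y) - gradient f (pair x' y')‖ := by
        rw [fstL_apply]; exact norm_fst_le _
    _ ≤ ℓ * ‖pair x y - pair x' y'‖ := hlip _ _

lemma grady_sub_le (hf : ContDiff ℝ 2 f)
    (hlip : ∀ p q : WithLp 2 (En n × En m), ‖gradient f p - gradient f q‖ ≤ ℓ * ‖p - q‖)
    (x x' : En n) (y y' : En m) :
    ‖grady f x y - grady f x' y'‖ ≤ ℓ * ‖pair x y - pair x' y'‖ := by
  rw [grady_eq hf, grady_eq hf, ← map_sub]
  calc ‖sndL n m (gradient f (pair x y) - gradient f (pair x' y'))‖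
      ≤ ‖gradient f (pair x y) - gradient f (pair x' y')‖ := by
        rw [sndL_apply]; exact norm_snd_le _
    _ ≤ ℓ * ‖pair x y - pair x' y'‖ := hlip _ _

lemma hasDerivAt_line (hf : ContDiff ℝ 2 f) (x : En n) (y2 d : En m) (μ t : ℝ) :
    HasDerivAt (fun t : ℝ => f (pair x (y2 + t • d)) + μ / 2 * ‖y2 + t • d‖ ^ 2)
      (⟪grady f x (y2 + t • d) + μ • (y2 + t • d), d⟫) t := by
  have hγ : HasDerivAt (fun t : ℝ => y2 + t • d) d t := by
    simpa using ((hasDerivAt_id t).smul_const d).const_add y2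
  have hφ : HasGradientAt (fun y' => f (pair x y')) (grady f x (y2 + t • d)) (y2 + t • d) :=
    (((diff_f hf (pair x (y2 + t • d))).hasFDerivAt.comp _
      (pairy_hasFDerivAt x _)).differentiableAt).hasGradientAt
  have h1 : HasDerivAt (fun t : ℝ => f (pair x (y2 + t • d)))
      (⟪grady f x (y2 + t • d), d⟫) t := by
    have := hφ.hasFDerivAt.comp_hasDerivAt t hγ
    simp only [InnerProductSpace.toDual_apply_apply] at this; exact this
  have h2 : HasDerivAt (fun t : ℝ => μ / 2 * ‖y2 + t • d‖ ^ 2)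
      (μ * ⟪y2 + t • d, d⟫) t := by
    have hi := (HasDerivAt.inner ℝ hγ hγ).const_mul (μ / 2)
    have he : (fun t : ℝ => μ / 2 * ‖y2 + t • d‖ ^ 2)
        = fun t : ℝ => μ / 2 * ⟪y2 + t • d, y2 + t • d⟫ := by
      funext s; rw [real_inner_self_eq_norm_sq]
    rw [he]
    refine hi.congr_deriv ?_
    rw [real_inner_comm d]; ring
  have h3 := h1.add h2
  refine h3.congr_deriv ?_
  rw [eq_comm, inner_add_left, real_inner_smul_left]

lemma grady_mono (hf : ContDiff ℝ 2 f) {μ : ℝ}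
    (hconc : ∀ x : En n, StrongConcaveOn Set.univ μ (fun y => f (pair x y)))
    (x : En n) (y1 y2 : En m) :
    ⟪grady f x y1 - grady f x y2, y1 - y2⟫ ≤ -(μ * ‖y1 - y2‖ ^ 2) := by
  set d := y1 - y2 with hd
  have hc : ConcaveOn ℝ Set.univ (fun y : En m => f (pair x y) + μ / 2 * ‖y‖ ^ 2) :=
    (strongConcaveOn_iff_convex).mp (hconc x)
  set u := fun t : ℝ => f (pair x (y2 + t • d)) + μ / 2 * ‖y2 + t • d‖ ^ 2 with hu_def
  have hu : ConcaveOn ℝ Set.univ u := by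
    have h := hc.comp_affineMap (AffineMap.lineMap y2 (y2 + d) : ℝ →ᵃ[ℝ] En m)
    have hA : ∀ t : ℝ, (AffineMap.lineMap y2 (y2 + d) : ℝ →ᵃ[ℝ] En m) t = y2 + t • d := by
      intro t
      rw [AffineMap.lineMap_apply]
      simp [add_comm]
    have hpre : ((AffineMap.lineMap y2 (y2 + d) : ℝ →ᵃ[ℝ] En m)) ⁻¹' Set.univ = Set.univ :=
      Set.preimage_univ
    rw [hpre] at h
    have hfun : u = (fun y : En m => f (pair x y) + μ / 2 * ‖y‖ ^ 2) ∘
        (AffineMap.lineMap y2 (y2 + d) : ℝ →ᵃ[ℝ] En m) := by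
      funext t
      simp only [Function.comp_apply, hA t, hu_def]
    rw [hfun]; exact h
  have hdiff : ∀ t ∈ Set.univ, DifferentiableAt ℝ u t := fun t _ =>
    (hasDerivAt_line hf x y2 d μ t).differentiableAt
  have hderiv : ∀ t : ℝ, deriv u t = ⟪grady f x (y2 + t • d) + μ • (y2 + t • d), d⟫ :=
    fun t => (hasDerivAt_line hf x y2 d μ t).deriv
  have hanti : AntitoneOn (deriv u) Set.univ := hu.antitoneOn_deriv hdiff
  have h01 : deriv u 1 ≤ deriv u 0 := hanti (Set.mem_univ 0) (Set.mem_univ 1) zero_le_one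
  rw [hderiv, hderiv] at h01
  have hy1 : y2 + (1 : ℝ) • d = y1 := by rw [one_smul, hd]; abel
  have hy2 : y2 + (0 : ℝ) • d = y2 := by rw [zero_smul, add_zero]
  rw [hy1, hy2] at h01
  rw [inner_add_left, inner_add_left, real_inner_smul_left, real_inner_smul_left] at h01
  have e1 : ⟪grady f x y1, d⟫ + μ * ⟪y1, d⟫ ≤ ⟪grady f x y2, d⟫ + μ * ⟪y2, d⟫ := h01
  have e2 : ⟪y1, d⟫ - ⟪y2, d⟫ = ‖d‖ ^ 2 := by
    rw [← inner_sub_left, ← hd]; exact real_inner_self_eq_norm_sq d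
  have e3 : μ * ⟪y1, d⟫ - μ * ⟪y2, d⟫ = μ * ‖d‖ ^ 2 := by rw [← mul_sub, e2]
  rw [inner_sub_left]
  linarith

lemma grady_star_zero {ystar : En n → En m}
    (hstar : ∀ (x : En n) (y : En m), f (pair x y) ≤ f (pair x (ystar x))) (x : En n) :
    grady f x (ystar x) = 0 := by
  have hmax : IsLocalMax (fun y => f (pair x y)) (ystar x) :=
    Filter.Eventually.of_forall (fun y => hstar x y)
  have hz := hmax.fderiv_eq_zero
  show (InnerProductSpace.toDual ℝ (En m)).symm
    (fderiv ℝ (fun y' => f (pair x y')) (ystar x)) = 0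
  rw [hz, map_zero]

lemma coercive_grady (hf : ContDiff ℝ 2 f) {μ : ℝ}
    (hconc : ∀ x : En n, StrongConcaveOn Set.univ μ (fun y => f (pair x y)))
    {ystar : En n → En m}
    (hstar : ∀ (x : En n) (y : En m), f (pair x y) ≤ f (pair x (ystar x)))
    (x : En n) (y : En m) :
    μ * ‖y - ystar x‖ ≤ ‖grady f x y‖ := by
  have h := grady_mono hf hconc x y (ystar x)
  rw [grady_star_zero hstar x, sub_zero] at h
  by_cases hz : y = ystar x
  · simp [hz]
  · have hno : 0 < ‖y - ystar x‖ := by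
      rw [norm_pos_iff]; exact sub_ne_zero_of_ne hz
    have habs := abs_real_inner_le_norm (grady f x y) (y - ystar x)
    have key : μ * ‖y - ystar x‖ * ‖y - ystar x‖ ≤ ‖grady f x y‖ * ‖y - ystar x‖ := by
      nlinarith [neg_abs_le (⟪grady f x y, y - ystar x⟫ : ℝ)]
    exact le_of_mul_le_mul_right key hno

lemma ystar_lip (hf : ContDiff ℝ 2 f) {ℓ μ : ℝ}
    (hconc : ∀ x : En n, StrongConcaveOn Set.univ μ (fun y => f (pair x y)))
    (hlip : ∀ p q : WithLp 2 (En n × En m), ‖gradient f p - gradient f q‖ ≤ ℓ * ‖p - q‖)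
    {ystar : En n → En m}
    (hstar : ∀ (x : En n) (y : En m), f (pair x y) ≤ f (pair x (ystar x)))
    (x1 x2 : En n) :
    μ * ‖ystar x1 - ystar x2‖ ≤ ℓ * ‖x1 - x2‖ := by
  have h := coercive_grady hf hconc hstar x1 (ystar x2)
  have h0 : grady f x2 (ystar x2) = 0 := grady_star_zero hstar x2
  have h1 : ‖grady f x1 (ystar x2)‖ ≤ ℓ * ‖x1 - x2‖ := by
    have h2 := grady_sub_le hf hlip x1 x2 (ystar x2) (ystar x2)
    rwa [h0, sub_zero, norm_pair_sub_left] at h2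
  have h3 := h.trans h1
  rwa [norm_sub_rev] at h3

lemma norm_fderiv_sub_eq (p q : WithLp 2 (En n × En m)) :
    ‖fderiv ℝ f p - fderiv ℝ f q‖ = ‖gradient f p - gradient f q‖ := by
  have : gradient f p - gradient f q
      = (InnerProductSpace.toDual ℝ (WithLp 2 (En n × En m))).symm
        (fderiv ℝ f p - fderiv ℝ f q) := by
    rw [map_sub]; rfl
  rw [this, LinearIsometryEquiv.norm_map]

lemma taylor_bound (hf : ContDiff ℝ 2 f) {ℓ : ℝ} (hℓ : 0 ≤ ℓ)
    (hlip : ∀ p q : WithLp 2 (En n × En m), ‖gradient f p - gradient f q‖ ≤ ℓ * ‖p - q‖)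
    (p q : WithLp 2 (En n × En m)) :
    |f q - f p - ⟪gradient f p, q - p⟫| ≤ ℓ * ‖q - p‖ ^ 2 := by
  have hseg : ∀ z ∈ segment ℝ p q, ‖z - p‖ ≤ ‖q - p‖ := by
    intro z hz
    obtain ⟨a, b, ha, hb, hab, rfl⟩ := hz
    have he : a • p + b • q - p = b • (q - p) := by
      have ha' : a = 1 - b := by linarith
      rw [ha']; module
    rw [he, norm_smul, Real.norm_eq_abs, abs_of_nonneg hb]
    have hb1 : b ≤ 1 := by linarith
    nlinarith [norm_nonneg (q - p)]
  have key := Convex.norm_image_sub_le_of_norm_fderiv_le'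
    (f := f) (φ := fderiv ℝ f p) (C := ℓ * ‖q - p‖) (s := segment ℝ p q)
    (fun z _ => (diff_f hf z))
    (fun z hz => by
      rw [norm_fderiv_sub_eq]
      calc ‖gradient f z - gradient f p‖ ≤ ℓ * ‖z - p‖ := hlip z p
        _ ≤ ℓ * ‖q - p‖ := by
          exact mul_le_mul_of_nonneg_left (hseg z hz) hℓ)
    (convex_segment p q) (left_mem_segment ℝ p q) (right_mem_segment ℝ p q)
  rw [← Real.norm_eq_abs]
  have hig : (⟪gradient f p, q - p⟫ : ℝ) = fderiv ℝ f p (q - p) := inner_gradient p (q - p)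
  rw [hig]
  calc ‖f q - f p - fderiv ℝ f p (q - p)‖ ≤ ℓ * ‖q - p‖ * ‖q - p‖ := key
    _ = ℓ * ‖q - p‖ ^ 2 := by ring

lemma Pmax_eq {ystar : En n → En m}
    (hstar : ∀ (x : En n) (y : En m), f (pair x y) ≤ f (pair x (ystar x))) (x : En n) :
    Pmax f x = f (pair x (ystar x)) := by
  apply le_antisymm
  · exact ciSup_le (fun y => hstar x y)
  · exact le_ciSup ⟨f (pair x (ystar x)), by
      rintro r ⟨y, rfl⟩; exact hstar x y⟩ (ystar x)

lemma hasGradientAt_Pmax (hf : ContDiff ℝ 2 f) {ℓ μ : ℝ} (hμ : 0 < μ) (hμℓ : μ ≤ ℓ)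
    (hlip : ∀ p q : WithLp 2 (En n × En m), ‖gradient f p - gradient f q‖ ≤ ℓ * ‖p - q‖)
    (hconc : ∀ x : En n, StrongConcaveOn Set.univ μ (fun y => f (pair x y)))
    {ystar : En n → En m}
    (hstar : ∀ (x : En n) (y : En m), f (pair x y) ≤ f (pair x (ystar x)))
    (x : En n) :
    HasGradientAt (Pmax f) (gradx f x (ystar x)) x := by
  have hℓ : 0 < ℓ := lt_of_lt_of_le hμ hμℓ
  set g := gradx f x (ystar x) with hg
  set C := ℓ * (1 + ℓ / μ) with hC
  have hCpos : 0 < C := by positivity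
  have hbound : ∀ h : En n, |Pmax f (x + h) - Pmax f x - ⟪g, h⟫| ≤ C * ‖h‖ ^ 2 := by
    intro h
    set y0 := ystar x
    set y1 := ystar (x + h)
    have hsub0 : pair (x + h) y0 - pair x y0 = pair h 0 := by
      rw [pair_sub, add_sub_cancel_left, sub_self]
    have hsub1 : pair (x + h) y1 - pair x y1 = pair h 0 := by
      rw [pair_sub, add_sub_cancel_left, sub_self]
    have hnh : ‖pair h (0 : En m)‖ = ‖h‖ := norm_pair_left h
    have hinner0 : ⟪gradient f (pair x y0), pair h (0 : En m)⟫ = ⟪g, h⟫ := by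
      rw [show gradient f (pair x y0)
          = pair (gradient f (pair x y0)).fst (gradient f (pair x y0)).snd from rfl, inner_pair]
      rw [inner_zero_right, add_zero, hg, gradx_eq hf]
      rfl
    have hPx : Pmax f x = f (pair x y0) := Pmax_eq hstar x
    have hPxh : Pmax f (x + h) = f (pair (x + h) y1) := Pmax_eq hstar (x + h)
    -- lower bound
    have htl := taylor_bound hf hℓ.le hlip (pair x y0) (pair (x + h) y0)
    rw [hsub0, hnh, hinner0] at htl
    have hlow : Pmax f x + ⟪g, h⟫ - ℓ * ‖h‖ ^ 2 ≤ Pmax f (x + h) := by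
      have h1 : f (pair (x + h) y0) ≤ Pmax f (x + h) := by
        rw [hPxh]; exact hstar (x + h) y0
      have h2 := abs_le.mp htl
      rw [hPx]
      linarith [h2.1]
    -- upper bound
    have htu := taylor_bound hf hℓ.le hlip (pair x y1) (pair (x + h) y1)
    rw [hsub1, hnh] at htu
    have hinner1 : ⟪gradient f (pair x y1), pair h (0 : En m)⟫ = ⟪gradx f x y1, h⟫ := by
      rw [show gradient f (pair x y1)
          = pair (gradient f (pair x y1)).fst (gradient f (pair x y1)).snd from rfl, inner_pair]
      rw [inner_zero_right, add_zero, gradx_eq hf]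
      rfl
    rw [hinner1] at htu
    have hy1y0 : ‖y1 - y0‖ ≤ (ℓ / μ) * ‖h‖ := by
      have := ystar_lip hf hconc hlip hstar (x + h) x
      rw [add_sub_cancel_left] at this
      rw [div_mul_eq_mul_div, le_div_iff₀ hμ, mul_comm]
      linarith
    have hdix : ⟪gradx f x y1, h⟫ ≤ ⟪g, h⟫ + ℓ * (ℓ / μ) * ‖h‖ ^ 2 := by
      have hsplit : ⟪gradx f x y1, h⟫ = ⟪g, h⟫ + ⟪gradx f x y1 - g, h⟫ := by
        rw [inner_sub_left]; ring
      have hcs := real_inner_le_norm (gradx f x y1 - g) h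
      have hdg : ‖gradx f x y1 - g‖ ≤ ℓ * ((ℓ / μ) * ‖h‖) := by
        have h3 := gradx_sub_le hf hlip x x y1 y0
        rw [norm_pair_sub_right] at h3
        calc ‖gradx f x y1 - g‖ ≤ ℓ * ‖y1 - y0‖ := h3
          _ ≤ ℓ * ((ℓ / μ) * ‖h‖) := mul_le_mul_of_nonneg_left hy1y0 hℓ.le
      have h4 : ⟪gradx f x y1 - g, h⟫ ≤ ℓ * (ℓ / μ) * ‖h‖ ^ 2 := by
        calc ⟪gradx f x y1 - g, h⟫ ≤ ‖gradx f x y1 - g‖ * ‖h‖ := hcs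
          _ ≤ ℓ * ((ℓ / μ) * ‖h‖) * ‖h‖ :=
              mul_le_mul_of_nonneg_right hdg (norm_nonneg h)
          _ = ℓ * (ℓ / μ) * ‖h‖ ^ 2 := by ring
      linarith [hsplit ▸ le_refl (⟪gradx f x y1, h⟫ : ℝ), h4, hsplit.le]
    have hup : Pmax f (x + h) ≤ Pmax f x + ⟪g, h⟫ + C * ‖h‖ ^ 2 := by
      have h1 : f (pair x y1) ≤ Pmax f x := by rw [hPx]; exact hstar x y1
      have h2 := (abs_le.mp htu).2
      have h5 : f (pair (x + h) y1) ≤ f (pair x y1) + ⟪gradx f x y1, h⟫ + ℓ * ‖h‖ ^ 2 := by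
        linarith
      rw [hPxh, hC]
      have : ℓ * (1 + ℓ / μ) * ‖h‖ ^ 2 = ℓ * ‖h‖ ^ 2 + ℓ * (ℓ / μ) * ‖h‖ ^ 2 := by ring
      rw [this]
      linarith
    rw [abs_le]
    constructor
    · have : ℓ * ‖h‖ ^ 2 ≤ C * ‖h‖ ^ 2 := by
        have : ℓ ≤ C := by
          rw [hC]
          nlinarith [div_nonneg hℓ.le hμ.le]
        nlinarith [sq_nonneg ‖h‖]
      linarith
    · linarith
  rw [hasGradientAt_iff_hasFDerivAt, hasFDerivAt_iff_isLittleO_nhds_zero,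
    Asymptotics.isLittleO_iff]
  intro c hc
  rw [Metric.eventually_nhds_iff]
  refine ⟨c / C, by positivity, fun h hh => ?_⟩
  rw [dist_zero_right] at hh
  have hb := hbound h
  have htd : (InnerProductSpace.toDual ℝ (En n)) g h = ⟪g, h⟫ :=
    InnerProductSpace.toDual_apply_apply
  rw [Real.norm_eq_abs, htd]
  calc |Pmax f (x + h) - Pmax f x - ⟪g, h⟫| ≤ C * ‖h‖ ^ 2 := hb
    _ ≤ c * ‖h‖ := by
        have h1 : C * ‖h‖ ≤ c := by
          calc C * ‖h‖ ≤ C * (c / C) := mul_le_mul_of_nonneg_left hh.le hCpos.le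
            _ = c := by field_simp
        calc C * ‖h‖ ^ 2 = (C * ‖h‖) * ‖h‖ := by ring
          _ ≤ c * ‖h‖ := mul_le_mul_of_nonneg_right h1 (norm_nonneg h)

lemma hyy_neg (hf : ContDiff ℝ 2 f) {μ : ℝ}
    (hconc : ∀ x : En n, StrongConcaveOn Set.univ μ (fun y => f (pair x y)))
    (x : En n) (y : En m) (v : En m) :
    ⟪Hyy f x y v, v⟫ ≤ -(μ * ‖v‖ ^ 2) := by
  have hD : HasFDerivAt (fun y' => grady f x y') (Hyy f x y) y := by
    rw [Hyy_eq hf]; exact hasFDerivAt_grady_y hf x y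
  have hγ : HasDerivAt (fun t : ℝ => y + t • v) v 0 := by
    simpa using ((hasDerivAt_id (0 : ℝ)).smul_const v).const_add y
  have hγ0 : y + (0 : ℝ) • v = y := by rw [zero_smul, add_zero]
  have hD' : HasFDerivAt (fun y' => grady f x y') (Hyy f x y) (y + (0 : ℝ) • v) := by
    rw [hγ0]; exact hD
  have hline : HasDerivAt (fun t : ℝ => grady f x (y + t • v)) (Hyy f x y v) 0 :=
    hD'.comp_hasDerivAt 0 hγ
  have hslope := hasDerivAt_iff_tendsto_slope.mp hline
  have hslope' : Filter.Tendsto (slope (fun t : ℝ => grady f x (y + t • v)) 0)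
      (nhdsWithin 0 (Set.Ioi 0)) (nhds (Hyy f x y v)) :=
    hslope.mono_left (nhdsWithin_mono 0 (fun t ht => Set.mem_compl_singleton_iff.mpr
      (ne_of_gt ht)))
  have hinner : Filter.Tendsto
      (fun t : ℝ => (⟪slope (fun t : ℝ => grady f x (y + t • v)) 0 t, v⟫ : ℝ))
      (nhdsWithin 0 (Set.Ioi 0)) (nhds (⟪Hyy f x y v, v⟫ : ℝ)) :=
    hslope'.inner tendsto_const_nhds
  refine le_of_tendsto hinner ?_
  filter_upwards [self_mem_nhdsWithin] with t ht
  have ht0 : (0 : ℝ) < t := ht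
  have hmono := grady_mono hf hconc x (y + t • v) y
  have hsub : y + t • v - y = t • v := by abel
  rw [hsub] at hmono
  rw [real_inner_smul_right, norm_smul, Real.norm_eq_abs, abs_of_pos ht0] at hmono
  set A : ℝ := ⟪grady f x (y + t • v) - grady f x y, v⟫ with hA
  have hmono' : t * A ≤ -(μ * (t ^ 2 * ‖v‖ ^ 2)) := by
    calc t * A ≤ -(μ * (t * ‖v‖) ^ 2) := hmono
      _ = -(μ * (t ^ 2 * ‖v‖ ^ 2)) := by ring
  have hAle : A ≤ -(μ * t * ‖v‖ ^ 2) := by nlinarith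
  have hsl : slope (fun t : ℝ => grady f x (y + t • v)) 0 t
      = t⁻¹ • (grady f x (y + t • v) - grady f x y) := by
    rw [slope_def_module]
    rw [hγ0]
    simp
  rw [hsl, real_inner_smul_left, ← hA]
  calc t⁻¹ * A ≤ t⁻¹ * (-(μ * t * ‖v‖ ^ 2)) :=
      mul_le_mul_of_nonneg_left hAle (inv_nonneg.mpr ht0.le)
    _ = -(μ * ‖v‖ ^ 2) := by field_simp

lemma hyy_lower (hf : ContDiff ℝ 2 f) {μ : ℝ} (hμ : 0 < μ)
    (hconc : ∀ x : En n, StrongConcaveOn Set.univ μ (fun y => f (pair x y)))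
    (x : En n) (y : En m) (v : En m) :
    μ * ‖v‖ ≤ ‖Hyy f x y v‖ := by
  have h := hyy_neg hf hconc x y v
  by_cases hz : v = 0
  · simp [hz]
  · have hno : 0 < ‖v‖ := norm_pos_iff.mpr hz
    have habs := abs_real_inner_le_norm (Hyy f x y v) v
    have key : μ * ‖v‖ * ‖v‖ ≤ ‖Hyy f x y v‖ * ‖v‖ := by
      nlinarith [neg_abs_le (⟪Hyy f x y v, v⟫ : ℝ)]
    exact le_of_mul_le_mul_right key hno

lemma hyy_inverse_props (hf : ContDiff ℝ 2 f) {μ : ℝ} (hμ : 0 < μ)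
    (hconc : ∀ x : En n, StrongConcaveOn Set.univ μ (fun y => f (pair x y)))
    (x : En n) (y : En m) :
    ((Hyy f x y).inverse).comp (Hyy f x y) = ContinuousLinearMap.id ℝ (En m)
    ∧ (Hyy f x y).comp ((Hyy f x y).inverse) = ContinuousLinearMap.id ℝ (En m)
    ∧ ‖(Hyy f x y).inverse‖ ≤ μ⁻¹ := by
  have hinj : Function.Injective (Hyy f x y) := by
    intro a b hab
    have h0 : Hyy f x y (a - b) = 0 := by rw [map_sub, hab, sub_self]
    have := hyy_lower hf hμ hconc x y (a - b)
    rw [h0, norm_zero] at this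
    have : ‖a - b‖ ≤ 0 := by
      by_contra hc
      push_neg at hc
      nlinarith
    have : a - b = 0 := norm_le_zero_iff.mp this
    exact sub_eq_zero.mp this
  have hbij : Function.Bijective (Hyy f x y) :=
    ⟨hinj, (LinearMap.injective_iff_surjective
      (f := ((Hyy f x y) : En m →ₗ[ℝ] En m))).mp hinj⟩
  let e0 : En m ≃ₗ[ℝ] En m := LinearEquiv.ofBijective ((Hyy f x y) : En m →ₗ[ℝ] En m) hbij
  let e : En m ≃L[ℝ] En m := e0.toContinuousLinearEquiv
  have hcoe : (e : En m →L[ℝ] En m) = Hyy f x y := by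
    ext v; rfl
  have hinv : (Hyy f x y).inverse = (e.symm : En m →L[ℝ] En m) := by
    rw [← hcoe, ContinuousLinearMap.inverse_equiv]
  refine ⟨?_, ?_, ?_⟩
  · rw [hinv, ← hcoe]
    ext v
    simp
  · rw [hinv, ← hcoe]
    ext v
    simp
  · rw [hinv]
    refine ContinuousLinearMap.opNorm_le_bound _ (inv_nonneg.mpr hμ.le) fun w => ?_
    have h1 : μ * ‖e.symm w‖ ≤ ‖Hyy f x y (e.symm w)‖ := hyy_lower hf hμ hconc x y _
    have h2 : Hyy f x y (e.symm w) = w := by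
      rw [← hcoe]
      exact e.apply_symm_apply w
    rw [h2] at h1
    rw [inv_mul_eq_div, le_div_iff₀ hμ, mul_comm]
    exact h1

lemma inverse_diff_le (hf : ContDiff ℝ 2 f) {μ : ℝ} (hμ : 0 < μ)
    (hconc : ∀ x : En n, StrongConcaveOn Set.univ μ (fun y => f (pair x y)))
    (x : En n) (y1 y2 : En m) :
    ‖(Hyy f x y1).inverse - (Hyy f x y2).inverse‖
      ≤ μ⁻¹ * μ⁻¹ * ‖Hyy f x y1 - Hyy f x y2‖ := by
  obtain ⟨hA1, hA2, hAn⟩ := hyy_inverse_props hf hμ hconc x y1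
  obtain ⟨hB1, hB2, hBn⟩ := hyy_inverse_props hf hμ hconc x y2
  have hid : (Hyy f x y1).inverse - (Hyy f x y2).inverse
      = ((Hyy f x y1).inverse).comp (((Hyy f x y2) - (Hyy f x y1)).comp
        ((Hyy f x y2).inverse)) := by
    ext w
    have hw1 : (Hyy f x y2) ((Hyy f x y2).inverse w) = w := by
      have h := ContinuousLinearMap.ext_iff.mp hB2 w
      simpa using h
    have hw2 : (Hyy f x y1).inverse ((Hyy f x y1) ((Hyy f x y2).inverse w))
        = (Hyy f x y2).inverse w := by
      have h := ContinuousLinearMap.ext_iff.mp hA1 ((Hyy f x y2).inverse w)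
      simpa using h
    simp only [ContinuousLinearMap.sub_apply, ContinuousLinearMap.comp_apply, map_sub]
    rw [hw1, hw2]
  rw [hid]
  calc ‖((Hyy f x y1).inverse).comp (((Hyy f x y2) - (Hyy f x y1)).comp
        ((Hyy f x y2).inverse))‖
      ≤ ‖(Hyy f x y1).inverse‖ * ‖((Hyy f x y2) - (Hyy f x y1)).comp
        ((Hyy f x y2).inverse)‖ := ContinuousLinearMap.opNorm_comp_le _ _
    _ ≤ ‖(Hyy f x y1).inverse‖ * (‖(Hyy f x y2) - (Hyy f x y1)‖ * ‖(Hyy f x y2).inverse‖) := by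
        exact mul_le_mul_of_nonneg_left (ContinuousLinearMap.opNorm_comp_le _ _)
          (norm_nonneg _)
    _ ≤ μ⁻¹ * (‖Hyy f x y1 - Hyy f x y2‖ * μ⁻¹) := by
        rw [norm_sub_rev (Hyy f x y2)]
        have h1 : ‖Hyy f x y1 - Hyy f x y2‖ * ‖(Hyy f x y2).inverse‖
            ≤ ‖Hyy f x y1 - Hyy f x y2‖ * μ⁻¹ :=
          mul_le_mul_of_nonneg_left hBn (norm_nonneg _)
        exact mul_le_mul hAn h1 (by positivity) (inv_nonneg.mpr hμ.le)
    _ = μ⁻¹ * μ⁻¹ * ‖Hyy f x y1 - Hyy f x y2‖ := by ring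

lemma Hmat_diff_le {ℓ μ ρ : ℝ} (hf : ContDiff ℝ 2 f) (hμ : 0 < μ) (hμℓ : μ ≤ ℓ)
    (hlip : ∀ p q : WithLp 2 (En n × En m), ‖gradient f p - gradient f q‖ ≤ ℓ * ‖p - q‖)
    (hconc : ∀ x : En n, StrongConcaveOn Set.univ μ (fun y => f (pair x y)))
    (hxx : ∀ (x x' : En n) (y y' : En m),
      ‖Hxx f x y - Hxx f x' y'‖ ≤ ρ * ‖pair x y - pair x' y'‖)
    (hxy : ∀ (x x' : En n) (y y' : En m),
      ‖Hxy f x y - Hxy f x' y'‖ ≤ ρ * ‖pair x y - pair x' y'‖)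
    (hyx : ∀ (x x' : En n) (y y' : En m),
      ‖Hyx f x y - Hyx f x' y'‖ ≤ ρ * ‖pair x y - pair x' y'‖)
    (hyy : ∀ (x x' : En n) (y y' : En m),
      ‖Hyy f x y - Hyy f x' y'‖ ≤ ρ * ‖pair x y - pair x' y'‖)
    (x : En n) (y1 y2 : En m) :
    ‖Hmat f x y1 - Hmat f x y2‖ ≤ ρ * (1 + ℓ / μ) ^ 2 * ‖y1 - y2‖ := by
  have hℓ0 : 0 ≤ ℓ := le_trans hμ.le hμℓ
  set Δ := ‖y1 - y2‖ with hΔ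
  have h1 : ‖Hxx f x y1 - Hxx f x y2‖ ≤ ρ * Δ := by
    have := hxx x x y1 y2; rwa [norm_pair_sub_right] at this
  have h2 : ‖Hxy f x y1 - Hxy f x y2‖ ≤ ρ * Δ := by
    have := hxy x x y1 y2; rwa [norm_pair_sub_right] at this
  have h3 : ‖Hyx f x y1 - Hyx f x y2‖ ≤ ρ * Δ := by
    have := hyx x x y1 y2; rwa [norm_pair_sub_right] at this
  have h4 : ‖Hyy f x y1 - Hyy f x y2‖ ≤ ρ * Δ := by
    have := hyy x x y1 y2; rwa [norm_pair_sub_right] at this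
  have hρΔ : 0 ≤ ρ * Δ := le_trans (norm_nonneg _) h1
  have hHxy2 : ‖Hxy f x y2‖ ≤ ℓ := norm_Hxy_le hf hℓ0 hlip x y2
  have hHyx1 : ‖Hyx f x y1‖ ≤ ℓ := norm_Hyx_le hf hℓ0 hlip x y1
  obtain ⟨-, -, hAn⟩ := hyy_inverse_props hf hμ hconc x y1
  obtain ⟨-, -, hBn⟩ := hyy_inverse_props hf hμ hconc x y2
  have hinvd : ‖(Hyy f x y1).inverse - (Hyy f x y2).inverse‖ ≤ μ⁻¹ * μ⁻¹ * (ρ * Δ) := by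
    refine le_trans (inverse_diff_le hf hμ hconc x y1 y2) ?_
    exact mul_le_mul_of_nonneg_left h4 (by positivity)
  have htele : Hmat f x y1 - Hmat f x y2
      = (Hxx f x y1 - Hxx f x y2)
        - ((Hxy f x y1 - Hxy f x y2).comp (((Hyy f x y1).inverse).comp (Hyx f x y1))
          + (Hxy f x y2).comp ((((Hyy f x y1).inverse) - ((Hyy f x y2).inverse)).comp
              (Hyx f x y1))
          + (Hxy f x y2).comp (((Hyy f x y2).inverse).comp (Hyx f x y1 - Hyx f x y2))) := by
    simp only [Hmat]
    refine ContinuousLinearMap.ext fun v => ?_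
    simp only [ContinuousLinearMap.sub_apply, ContinuousLinearMap.add_apply,
      ContinuousLinearMap.comp_apply, map_sub]
    module
  have hμinv : 0 ≤ μ⁻¹ := inv_nonneg.mpr hμ.le
  have hT1 : ‖(Hxy f x y1 - Hxy f x y2).comp (((Hyy f x y1).inverse).comp (Hyx f x y1))‖
      ≤ ρ * Δ * (μ⁻¹ * ℓ) := by
    refine le_trans (ContinuousLinearMap.opNorm_comp_le _ _) ?_
    have hinner : ‖((Hyy f x y1).inverse).comp (Hyx f x y1)‖ ≤ μ⁻¹ * ℓ :=
      le_trans (ContinuousLinearMap.opNorm_comp_le _ _)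
        (mul_le_mul hAn hHyx1 (norm_nonneg _) hμinv)
    exact mul_le_mul h2 hinner (norm_nonneg _) hρΔ
  have hT2 : ‖(Hxy f x y2).comp ((((Hyy f x y1).inverse) - ((Hyy f x y2).inverse)).comp
      (Hyx f x y1))‖ ≤ ℓ * (μ⁻¹ * μ⁻¹ * (ρ * Δ) * ℓ) := by
    refine le_trans (ContinuousLinearMap.opNorm_comp_le _ _) ?_
    have hinner : ‖(((Hyy f x y1).inverse) - ((Hyy f x y2).inverse)).comp (Hyx f x y1)‖
        ≤ μ⁻¹ * μ⁻¹ * (ρ * Δ) * ℓ :=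
      le_trans (ContinuousLinearMap.opNorm_comp_le _ _)
        (mul_le_mul hinvd hHyx1 (norm_nonneg _) (by positivity))
    exact mul_le_mul hHxy2 hinner (norm_nonneg _) hℓ0
  have hT3 : ‖(Hxy f x y2).comp (((Hyy f x y2).inverse).comp (Hyx f x y1 - Hyx f x y2))‖
      ≤ ℓ * (μ⁻¹ * (ρ * Δ)) := by
    refine le_trans (ContinuousLinearMap.opNorm_comp_le _ _) ?_
    have hinner : ‖((Hyy f x y2).inverse).comp (Hyx f x y1 - Hyx f x y2)‖ ≤ μ⁻¹ * (ρ * Δ) :=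
      le_trans (ContinuousLinearMap.opNorm_comp_le _ _)
        (mul_le_mul hBn h3 (norm_nonneg _) hμinv)
    exact mul_le_mul hHxy2 hinner (norm_nonneg _) hℓ0
  rw [htele]
  have hfinal : ρ * Δ + (ρ * Δ * (μ⁻¹ * ℓ) + ℓ * (μ⁻¹ * μ⁻¹ * (ρ * Δ) * ℓ)
      + ℓ * (μ⁻¹ * (ρ * Δ))) = ρ * (1 + ℓ / μ) ^ 2 * Δ := by
    field_simp
    ring
  calc ‖(Hxx f x y1 - Hxx f x y2)
        - ((Hxy f x y1 - Hxy f x y2).comp (((Hyy f x y1).inverse).comp (Hyx f x y1))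
          + (Hxy f x y2).comp ((((Hyy f x y1).inverse) - ((Hyy f x y2).inverse)).comp
              (Hyx f x y1))
          + (Hxy f x y2).comp (((Hyy f x y2).inverse).comp (Hyx f x y1 - Hyx f x y2)))‖
      ≤ ‖Hxx f x y1 - Hxx f x y2‖
        + (‖(Hxy f x y1 - Hxy f x y2).comp (((Hyy f x y1).inverse).comp (Hyx f x y1))‖
          + ‖(Hxy f x y2).comp ((((Hyy f x y1).inverse) - ((Hyy f x y2).inverse)).comp
              (Hyx f x y1))‖
          + ‖(Hxy f x y2).comp (((Hyy f x y2).inverse).comp (Hyx f x y1 - Hyx f x y2))‖) := by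
        exact le_trans (norm_sub_le _ _) (add_le_add le_rfl norm_add₃_le)
    _ ≤ ρ * Δ + (ρ * Δ * (μ⁻¹ * ℓ) + ℓ * (μ⁻¹ * μ⁻¹ * (ρ * Δ) * ℓ) + ℓ * (μ⁻¹ * (ρ * Δ))) := by
        gcongr
    _ = ρ * (1 + ℓ / μ) ^ 2 * Δ := hfinal

lemma norm_pair_le (a : En n) (b : En m) : ‖pair a b‖ ≤ ‖a‖ + ‖b‖ := by
  have h : pair a b = pair a 0 + pair 0 b := by rw [pair_add]; simp
  rw [h]
  exact le_trans (norm_add_le _ _) (by rw [norm_pair_left, norm_pair_right])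

lemma hasFDerivAt_ystar (hf : ContDiff ℝ 2 f) {ℓ μ : ℝ} (hμ : 0 < μ) (hμℓ : μ ≤ ℓ)
    (hlip : ∀ p q : WithLp 2 (En n × En m), ‖gradient f p - gradient f q‖ ≤ ℓ * ‖p - q‖)
    (hconc : ∀ x : En n, StrongConcaveOn Set.univ μ (fun y => f (pair x y)))
    {ystar : En n → En m}
    (hstar : ∀ (x : En n) (y : En m), f (pair x y) ≤ f (pair x (ystar x)))
    (x : En n) :
    HasFDerivAt ystar
      (-(((Hyy f x (ystar x)).inverse).comp (Hyx f x (ystar x)))) x := by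
  have hℓ : 0 < ℓ := lt_of_lt_of_le hμ hμℓ
  set y0 := ystar x with hy0
  set p := pair x y0 with hp
  set M : En n →L[ℝ] En m := -(((Hyy f x y0).inverse).comp (Hyx f x y0)) with hM
  obtain ⟨hI1, hI2, hIn⟩ := hyy_inverse_props hf hμ hconc x y0
  set κ := ℓ / μ with hκ
  have hκ0 : 0 ≤ κ := by positivity
  -- the path θ
  set θ : En n → WithLp 2 (En n × En m) := fun h => pair (x + h) (ystar (x + h)) with hθ
  have hΔbound : ∀ h : En n, ‖ystar (x + h) - y0‖ ≤ κ * ‖h‖ := by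
    intro h
    have := ystar_lip hf hconc hlip hstar (x + h) x
    rw [add_sub_cancel_left] at this
    rw [hκ, div_mul_eq_mul_div, le_div_iff₀ hμ, mul_comm]
    linarith
  have hθsub : ∀ h : En n, θ h - p = pair h (ystar (x + h) - y0) := by
    intro h
    rw [hθ, hp, pair_sub, add_sub_cancel_left]
  have hθbound : ∀ h : En n, ‖θ h - p‖ ≤ (1 + κ) * ‖h‖ := by
    intro h
    rw [hθsub h]
    refine le_trans (norm_pair_le _ _) ?_
    have := hΔbound h
    linarith
  -- Ψ and its derivative
  set A := fderiv ℝ (gradient f) p with hA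
  set B := (sndL n m).comp A with hB
  have hΨ : HasFDerivAt (fun z => sndL n m (gradient f z)) B p :=
    (sndL n m).hasFDerivAt.comp p ((gradf_diff hf p).hasFDerivAt)
  have hΨzero : ∀ x' : En n, sndL n m (gradient f (pair x' (ystar x'))) = 0 := by
    intro x'
    rw [← grady_eq hf]
    exact grady_star_zero hstar x'
  -- tendsto of θ
  have hθtendsto : Filter.Tendsto θ (nhds 0) (nhds p) := by
    have h0 : Filter.Tendsto (fun h : En n => θ h - p) (nhds 0) (nhds 0) := by
      apply squeeze_zero_norm hθbound
      have : Filter.Tendsto (fun h : En n => ‖h‖) (nhds 0) (nhds 0) := by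
        simpa using (continuous_norm.tendsto (0 : En n))
      simpa using this.const_mul (1 + κ)
    exact tendsto_sub_nhds_zero_iff.mp h0
  -- littleO chain
  have hlo1 : (fun z => sndL n m (gradient f z) - sndL n m (gradient f p) - B (z - p))
      =o[nhds p] (fun z => z - p) := hΨ.isLittleO
  have hlo2 : (fun h : En n => sndL n m (gradient f (θ h)) - sndL n m (gradient f p)
      - B (θ h - p)) =o[nhds 0] (fun h => θ h - p) := hlo1.comp_tendsto hθtendsto
  have hbo : (fun h : En n => θ h - p) =O[nhds 0] (fun h : En n => h) := by
    apply Asymptotics.IsBigO.of_bound (1 + κ)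
    filter_upwards with h
    exact hθbound h
  have hlo3 : (fun h : En n => sndL n m (gradient f (θ h)) - sndL n m (gradient f p)
      - B (θ h - p)) =o[nhds 0] (fun h : En n => h) := hlo2.trans_isBigO hbo
  have hw : (fun h : En n => -(B (θ h - p))) =o[nhds 0] (fun h : En n => h) := by
    refine hlo3.congr' ?_ (Filter.EventuallyEq.refl _ _)
    filter_upwards with h
    have h1 : sndL n m (gradient f (θ h)) = 0 := hΨzero (x + h)
    have h2 : sndL n m (gradient f p) = 0 := hΨzero x
    rw [h1, h2]
    abel
  have hwlo : (fun h : En n => B (θ h - p)) =o[nhds 0] (fun h : En n => h) := by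
    simpa using hw.neg_left
  -- express B (θ h - p)
  have hBexpr : ∀ h : En n, B (θ h - p)
      = Hyx f x y0 h + Hyy f x y0 (ystar (x + h) - y0) := by
    intro h
    rw [hθsub h]
    have hsplit : pair h (ystar (x + h) - y0)
        = inlL n m h + inrL n m (ystar (x + h) - y0) := by
      rw [inlL_apply, inrL_apply, pair_add]; simp
    rw [hsplit]
    rw [hB, Hyx_eq hf, Hyy_eq hf]
    simp only [ContinuousLinearMap.comp_apply, map_add, hA, hp]
  -- apply the inverse
  have hfinal : ∀ h : En n, ystar (x + h) - ystar x - M h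
      = (Hyy f x y0).inverse (B (θ h - p)) := by
    intro h
    rw [hBexpr h, map_add]
    have hid : (Hyy f x y0).inverse (Hyy f x y0 (ystar (x + h) - y0))
        = ystar (x + h) - y0 := by
      have := ContinuousLinearMap.ext_iff.mp hI1 (ystar (x + h) - y0)
      simpa using this
    rw [hid, hM]
    simp only [ContinuousLinearMap.neg_apply, ContinuousLinearMap.comp_apply]
    abel
  rw [hasFDerivAt_iff_isLittleO_nhds_zero]
  have hcomp : (fun h : En n => (Hyy f x y0).inverse (B (θ h - p)))
      =o[nhds 0] (fun h : En n => h) :=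
    (((Hyy f x y0).inverse).isBigO_comp _ _).trans_isLittleO hwlo
  refine hcomp.congr' ?_ (Filter.EventuallyEq.refl _ _)
  filter_upwards with h
  exact (hfinal h).symm

lemma hessP_eq (hf : ContDiff ℝ 2 f) {ℓ μ : ℝ} (hμ : 0 < μ) (hμℓ : μ ≤ ℓ)
    (hlip : ∀ p q : WithLp 2 (En n × En m), ‖gradient f p - gradient f q‖ ≤ ℓ * ‖p - q‖)
    (hconc : ∀ x : En n, StrongConcaveOn Set.univ μ (fun y => f (pair x y)))
    {ystar : En n → En m}
    (hstar : ∀ (x : En n) (y : En m), f (pair x y) ≤ f (pair x (ystar x)))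
    (x : En n) :
    hessP (Pmax f) x = Hmat f x (ystar x) := by
  have hgrad : gradient (Pmax f) = fun x' => gradx f x' (ystar x') :=
    funext fun x' => (hasGradientAt_Pmax hf hμ hμℓ hlip hconc hstar x').gradient
  have hystar := hasFDerivAt_ystar hf hμ hμℓ hlip hconc hstar x
  set y0 := ystar x with hy0
  set M : En n →L[ℝ] En m := -(((Hyy f x y0).inverse).comp (Hyx f x y0)) with hM
  have hθ : HasFDerivAt (fun x' => pair x' (ystar x'))
      ((inlL n m) + (inrL n m).comp M) x := by
    have h1 : (fun x' : En n => pair x' (ystar x'))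
        = fun x' => inlL n m x' + inrL n m (ystar x') := by
      funext x'; rw [inlL_apply, inrL_apply, pair_add]; simp
    rw [h1]
    exact ((inlL n m).hasFDerivAt).add (((inrL n m).hasFDerivAt).comp x hystar)
  have hK : HasFDerivAt (fun x' => gradx f x' (ystar x'))
      ((fstL n m).comp ((fderiv ℝ (gradient f) (pair x y0)).comp
        ((inlL n m) + (inrL n m).comp M))) x := by
    have h2 : (fun x' => gradx f x' (ystar x'))
        = fun x' => fstL n m (gradient f (pair x' (ystar x'))) :=
      funext fun x' => gradx_eq hf x' (ystar x')
    rw [h2]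
    exact ((fstL n m).hasFDerivAt).comp x
      (((gradf_diff hf (pair x y0)).hasFDerivAt).comp (g := gradient f) x hθ)
  have heq : (fstL n m).comp ((fderiv ℝ (gradient f) (pair x y0)).comp
        ((inlL n m) + (inrL n m).comp M)) = Hmat f x y0 := by
    simp only [Hmat]
    rw [Hxx_eq hf, Hxy_eq hf]
    refine ContinuousLinearMap.ext fun v => ?_
    simp only [ContinuousLinearMap.comp_apply, ContinuousLinearMap.add_apply,
      ContinuousLinearMap.sub_apply, ContinuousLinearMap.neg_apply, hM, map_add, map_neg]
    abel
  show fderiv ℝ (gradient (Pmax f)) x = Hmat f x y0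
  rw [hgrad, hK.fderiv, heq]

end S5
/-- For all `x, y`, the gradient and Hessian estimation errors satisfy
`‖∇P(x) − ∇ₓf(x,y)‖ ≤ ℓ‖y − y*(x)‖` and `‖∇²P(x) − H(x,y)‖ ≤ L_H ‖y − y*(x)‖` with
`L_H = ρ(1+κ)²`, `κ = ℓ/μ`. -/
theorem statement5 {n m : ℕ} (f : WithLp 2 (En n × En m) → ℝ) (ℓ μ ρ : ℝ)
    (hμ : 0 < μ) (hμℓ : μ ≤ ℓ)
    (hf : ContDiff ℝ 2 f)
    (hlip : ∀ p q : WithLp 2 (En n × En m), ‖gradient f p - gradient f q‖ ≤ ℓ * ‖p - q‖)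
    (hxx : ∀ (x x' : En n) (y y' : En m),
      ‖Hxx f x y - Hxx f x' y'‖ ≤ ρ * ‖pair x y - pair x' y'‖)
    (hxy : ∀ (x x' : En n) (y y' : En m),
      ‖Hxy f x y - Hxy f x' y'‖ ≤ ρ * ‖pair x y - pair x' y'‖)
    (hyx : ∀ (x x' : En n) (y y' : En m),
      ‖Hyx f x y - Hyx f x' y'‖ ≤ ρ * ‖pair x y - pair x' y'‖)
    (hyy : ∀ (x x' : En n) (y y' : En m),
      ‖Hyy f x y - Hyy f x' y'‖ ≤ ρ * ‖pair x y - pair x' y'‖)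
    (hconc : ∀ x : En n, StrongConcaveOn Set.univ μ (fun y => f (pair x y)))
    (ystar : En n → En m)
    (hstar : ∀ (x : En n) (y : En m), f (pair x y) ≤ f (pair x (ystar x))) :
    ∀ (x : En n) (y : En m),
      ‖gradient (Pmax f) x - gradx f x y‖ ≤ ℓ * ‖y - ystar x‖ ∧
      ‖hessP (Pmax f) x - Hmat f x y‖ ≤ ρ * (1 + ℓ / μ) ^ 2 * ‖y - ystar x‖ := by
  intro x y
  constructor
  · rw [(S5.hasGradientAt_Pmax hf hμ hμℓ hlip hconc hstar x).gradient]
    have h := S5.gradx_sub_le hf hlip x x (ystar x) y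
    rw [S5.norm_pair_sub_right] at h
    rw [norm_sub_rev y (ystar x)]
    exact h
  · rw [S5.hessP_eq hf hμ hμℓ hlip hconc hstar x]
    have h := S5.Hmat_diff_le hf hμ hμℓ hlip hconc hxx hxy hyx hyy x (ystar x) y
    rwa [norm_sub_rev y (ystar x)]
end
end
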